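/- arXiv:1511.08302 — 11 statements merged into one kernel-verified Lean document; each statement's English description precedes it below -/
import Mathlib

section
/- Let F be a field and m, n, p, q positive integers. If linear maps φ : M_{m×p}(F) → M_{m×q}(F) and ψ : M_{n×p}(F) → M_{n×q}(F) satisfy φ(A·B) = A·ψ(B) for all A ∈ M_{m×n}(F) and B ∈ M_{n×p}(F), then there exists a matrix X ∈ M_{p×q}(F) such that φ(C) = C·X for all C ∈ M_{m×p}(F) and ψ(D) = D·X for all D ∈ M_{n×p}(F). -/
theorem stmt2 (F : Type*) [Field F] (m n p q : ℕ)
    (hm : 0 < m) (hn : 0 < n) (hp : 0 < p) (hq : 0 < q)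
    (φ : Matrix (Fin m) (Fin p) F →ₗ[F] Matrix (Fin m) (Fin q) F)
    (ψ : Matrix (Fin n) (Fin p) F →ₗ[F] Matrix (Fin n) (Fin q) F)
    (h : ∀ (A : Matrix (Fin m) (Fin n) F) (B : Matrix (Fin n) (Fin p) F),
      φ (A * B) = A * ψ B) :
    ∃ X : Matrix (Fin p) (Fin q) F,
      (∀ C : Matrix (Fin m) (Fin p) F, φ C = C * X) ∧
      (∀ D : Matrix (Fin n) (Fin p) F, ψ D = D * X) := by
  let i0 : Fin m := ⟨0, hm⟩
  let j0 : Fin n := ⟨0, hn⟩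
  set X : Matrix (Fin p) (Fin q) F :=
    Matrix.of (fun k l => φ (Matrix.single i0 k (1:F)) i0 l) with hX
  have hψ : ∀ D : Matrix (Fin n) (Fin p) F, ψ D = D * X := by
    intro D
    ext j l
    have h1 := congrFun (congrFun (h (Matrix.single i0 j (1:F)) D) i0) l
    have hrow : (Matrix.single i0 j (1:F) * ψ D) i0 l = ψ D j l := by
      simp [Matrix.mul_apply, Matrix.single]
    have hdec : Matrix.single i0 j (1:F) * D
        = ∑ k : Fin p, D j k • Matrix.single i0 k (1:F) := by
      ext a b
      simp [Matrix.mul_apply, Matrix.single, Matrix.sum_apply, ite_and]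
    rw [hrow, hdec, map_sum] at h1
    simp only [map_smul] at h1
    rw [← h1]
    simp [Matrix.mul_apply, Matrix.sum_apply, hX]
  refine ⟨X, ?_, hψ⟩
  intro C
  have hC : C = ∑ i : Fin m, ∑ k : Fin p,
      C i k • (Matrix.single i j0 (1:F) * Matrix.single j0 k (1:F)) := by
    ext a b
    simp [Matrix.mul_apply, Matrix.single, Matrix.sum_apply, ite_and]
  calc φ C = ∑ i : Fin m, ∑ k : Fin p,
        C i k • φ (Matrix.single i j0 (1:F) * Matrix.single j0 k (1:F)) := by
        conv_lhs => rw [hC]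
        simp only [map_sum, map_smul]
    _ = ∑ i : Fin m, ∑ k : Fin p,
        C i k • ((Matrix.single i j0 (1:F) * Matrix.single j0 k (1:F)) * X) := by
        refine Finset.sum_congr rfl fun i _ => Finset.sum_congr rfl fun k _ => ?_
        rw [h, hψ, Matrix.mul_assoc]
    _ = (∑ i : Fin m, ∑ k : Fin p,
        C i k • (Matrix.single i j0 (1:F) * Matrix.single j0 k (1:F))) * X := by
        rw [Matrix.sum_mul]
        exact Finset.sum_congr rfl fun i _ => by
          rw [Matrix.sum_mul]
          exact Finset.sum_congr rfl fun k _ => (Matrix.smul_mul _ _ _).symm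
    _ = C * X := by rw [← hC]
end

section
/- Let F be a field and m, n, p, q positive integers. If linear maps φ : M_{m×p}(F) → M_{n×p}(F) and ψ : M_{m×q}(F) → M_{n×q}(F) satisfy φ(B·A) = ψ(B)·A for all A ∈ M_{q×p}(F) and B ∈ M_{m×q}(F), then there exists X ∈ M_{n×m}(F) such that φ(C) = X·C for all C ∈ M_{m×p}(F) and ψ(D) = X·D for all D ∈ M_{m×q}(F). -/
open Matrix

theorem stmt3 (F : Type*) [Field F] (m n p q : ℕ)
    (hm : 0 < m) (hn : 0 < n) (hp : 0 < p) (hq : 0 < q)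
    (φ : Matrix (Fin m) (Fin p) F →ₗ[F] Matrix (Fin n) (Fin p) F)
    (ψ : Matrix (Fin m) (Fin q) F →ₗ[F] Matrix (Fin n) (Fin q) F)
    (h : ∀ (A : Matrix (Fin q) (Fin p) F) (B : Matrix (Fin m) (Fin q) F),
      φ (B * A) = ψ B * A) :
    ∃ X : Matrix (Fin n) (Fin m) F,
      (∀ C : Matrix (Fin m) (Fin p) F, φ C = X * C) ∧
      (∀ D : Matrix (Fin m) (Fin q) F, ψ D = X * D) := by
  set z : Fin p := ⟨0, hp⟩ with hz
  set zq : Fin q := ⟨0, hq⟩ with hzq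
  set X : Matrix (Fin n) (Fin m) F :=
    Matrix.of (fun i j => φ (Matrix.single j z (1:F)) i z) with hX
  have prodB : ∀ (j : Fin m) (l l' : Fin q),
      (Matrix.single j l (1:F) * Matrix.single l' z (1:F)) =
        if l = l' then Matrix.single j z (1:F) else 0 := by
    intro j l l'
    ext a b
    simp only [Matrix.mul_apply, Matrix.single, Matrix.of_apply]
    by_cases hll : l = l'
    · subst hll
      simp only [if_pos rfl]
      rw [Finset.sum_eq_single l]
      · by_cases h1 : j = a <;> by_cases h2 : z = b <;> simp [h1, h2]
      · intro k _ hk; simp [hk.symm]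
      · simp
    · rw [if_neg hll]
      simp only [Matrix.zero_apply]
      apply Finset.sum_eq_zero
      intro k _
      rcases eq_or_ne l' k with h2 | h2
      · have hlk : l ≠ k := fun hl => hll (hl.trans h2.symm)
        simp [hlk]
      · simp [h2]
  have hψ : ∀ (j : Fin m) (l : Fin q),
      ψ (Matrix.single j l (1:F)) = X * Matrix.single j l (1:F) := by
    intro j l
    ext i l'
    have h1 := h (Matrix.single l' z (1:F)) (Matrix.single j l (1:F))
    rw [prodB j l l'] at h1
    have h2 := congrArg (fun M => M i z) h1
    beta_reduce at h2
    have hR : (ψ (Matrix.single j l (1:F)) * Matrix.single l' z (1:F)) i z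
        = ψ (Matrix.single j l (1:F)) i l' := by
      simp only [Matrix.mul_apply, Matrix.single, Matrix.of_apply]
      rw [Finset.sum_eq_single l']
      · simp
      · intro k _ hk; simp [hk.symm]
      · simp
    rw [hR] at h2
    have hMul : (X * Matrix.single j l (1:F)) i l'
        = if l = l' then X i j else 0 := by
      simp only [Matrix.mul_apply, Matrix.single, Matrix.of_apply]
      by_cases hll : l = l'
      · subst hll
        rw [if_pos rfl, Finset.sum_eq_single j]
        · simp
        · intro k _ hk; simp [hk.symm]
        · simp
      · rw [if_neg hll]
        apply Finset.sum_eq_zero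
        intro k _
        simp [hll]
    rw [hMul]
    by_cases hll : l = l'
    · rw [if_pos hll, ← h2, if_pos hll, hX]
      rfl
    · rw [if_neg hll, ← h2, if_neg hll, map_zero]
      rfl
  have hψall : ∀ D : Matrix (Fin m) (Fin q) F, ψ D = X * D := by
    intro D
    nth_rewrite 1 [Matrix.matrix_eq_sum_single D]
    nth_rewrite 2 [Matrix.matrix_eq_sum_single D]
    rw [map_sum, Matrix.mul_sum]
    refine Finset.sum_congr rfl (fun j _ => ?_)
    rw [map_sum, Matrix.mul_sum]
    refine Finset.sum_congr rfl (fun l _ => ?_)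
    have hsm : Matrix.single j l (D j l) = D j l • Matrix.single j l (1:F) := by
      rw [Matrix.smul_single, smul_eq_mul, mul_one]
    rw [hsm, _root_.map_smul, hψ, Matrix.mul_smul]
  refine ⟨X, ?_, hψall⟩
  intro C
  have hφ : ∀ (j : Fin m) (k : Fin p),
      φ (Matrix.single j k (1:F)) = X * Matrix.single j k (1:F) := by
    intro j k
    have h1 := h (Matrix.single zq k (1:F)) (Matrix.single j zq (1:F))
    have hprod : Matrix.single j zq (1:F) * Matrix.single zq k (1:F)
        = Matrix.single j k (1:F) := by
      ext a b
      simp only [Matrix.mul_apply, Matrix.single, Matrix.of_apply]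
      rw [Finset.sum_eq_single zq]
      · by_cases h1 : j = a <;> by_cases h2 : k = b <;> simp [h1, h2]
      · intro x _ hx; simp [hx.symm]
      · simp
    rw [hprod, hψall] at h1
    rw [h1, Matrix.mul_assoc, hprod]
  nth_rewrite 1 [Matrix.matrix_eq_sum_single C]
  nth_rewrite 2 [Matrix.matrix_eq_sum_single C]
  rw [map_sum, Matrix.mul_sum]
  refine Finset.sum_congr rfl (fun j _ => ?_)
  rw [map_sum, Matrix.mul_sum]
  refine Finset.sum_congr rfl (fun k _ => ?_)
  have hsm : Matrix.single j k (C j k) = C j k • Matrix.single j k (1:F) := by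
    rw [Matrix.smul_single, smul_eq_mul, mul_one]
  rw [hsm, _root_.map_smul, hφ, Matrix.mul_smul]
end

section
/- Let F be a field with characteristic different from 2 and 3, let n ≥ 1 and m ≥ 1. If a linear map φ : sl_n(F) → M_{n×m}(F) satisfies φ(AB − BA) = A·φ(B) − B·φ(A) for all A, B ∈ sl_n(F), then there exists X ∈ M_{n×m}(F) such that φ(C) = C·X for all C ∈ sl_n(F). -/
open Matrix

theorem mulE_apply {F : Type*} [Field F] {n m : ℕ} (i j : Fin n)
    (M : Matrix (Fin n) (Fin m) F) (a : Fin n) (b : Fin m) :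
    (Matrix.single i j (1:F) * M) a b = if a = i then M j b else 0 := by
  rw [Matrix.mul_apply]
  by_cases hai : a = i
  · subst hai
    simp [Matrix.single, Matrix.of_apply, ite_and]
  · simp [Matrix.single, Matrix.of_apply, ite_and, Ne.symm hai, hai]

theorem stmt5 (F : Type*) [Field F] (h2 : ringChar F ≠ 2) (h3 : ringChar F ≠ 3)
    (n m : ℕ) (hn : 1 ≤ n) (hm : 1 ≤ m)
    (φ : Matrix (Fin n) (Fin n) F →ₗ[F] Matrix (Fin n) (Fin m) F)
    (h : ∀ A B : Matrix (Fin n) (Fin n) F, A.trace = 0 → B.trace = 0 →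
      φ (A * B - B * A) = A * φ B - B * φ A) :
    ∃ X : Matrix (Fin n) (Fin m) F,
      ∀ C : Matrix (Fin n) (Fin n) F, C.trace = 0 → φ C = C * X := by
  have h2' : (2 : F) ≠ 0 := by
    intro hc
    have hd : ringChar F ∣ 2 :=
      (CharP.cast_eq_zero_iff F (ringChar F) 2).mp (by exact_mod_cast hc)
    rcases (Nat.dvd_prime Nat.prime_two).mp hd with hh | hh
    · exact CharP.ringChar_ne_one hh
    · exact h2 hh
  have h3' : (3 : F) ≠ 0 := by
    intro hc
    have hd : ringChar F ∣ 3 :=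
      (CharP.cast_eq_zero_iff F (ringChar F) 3).mp (by exact_mod_cast hc)
    rcases (Nat.dvd_prime Nat.prime_three).mp hd with hh | hh
    · exact CharP.ringChar_ne_one hh
    · exact h3 hh
  by_cases hn2 : 2 ≤ n
  · -- main case n ≥ 2
    set E : Fin n → Fin n → Matrix (Fin n) (Fin n) F :=
      fun i j => Matrix.single i j (1:F) with hE
    have htE : ∀ i j : Fin n, i ≠ j → (E i j).trace = 0 := by
      intro i j hij
      exact Matrix.trace_single_eq_of_ne i j (1:F) hij
    have htH : ∀ i j : Fin n, (E i i - E j j).trace = 0 := by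
      intro i j
      simp [hE, Matrix.trace_sub, Matrix.trace_single_eq_same]
    -- Lemma A : rows other than i of φ(E i j) vanish
    have lemA : ∀ (i j : Fin n), i ≠ j → ∀ (a : Fin n) (b : Fin m), a ≠ i →
        φ (E i j) a b = 0 := by
      intro i j hij a b hai
      have key := h (E i i - E j j) (E i j) (htH i j) (htE i j hij)
      have hcomm : (E i i - E j j) * E i j - E i j * (E i i - E j j) = E i j + E i j := by
        have m1 := Matrix.single_mul_single_same (1:F) i i j (1:F)
        have m2 := (Matrix.single_mul_single_of_ne (1:F) j j i hij.symm (1:F) : Matrix.single j j (1:F) * Matrix.single i j (1:F) = 0)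
        have m3 := (Matrix.single_mul_single_of_ne (1:F) i j i hij.symm (1:F) : Matrix.single i j (1:F) * Matrix.single i i (1:F) = 0)
        have m4 := Matrix.single_mul_single_same (1:F) i j j (1:F)
        simp only [hE, Matrix.sub_mul, Matrix.mul_sub, m1, m2, m3, m4, one_mul]
        abel
      rw [hcomm] at key
      have e := congrArg (fun M => M a b) key
      simp only [hE, map_add, Matrix.add_apply, Matrix.sub_mul, Matrix.sub_apply,
        mulE_apply] at e
      rw [if_neg hai, if_neg hai] at e
      by_cases haj : a = j
      · subst haj
        rw [if_pos rfl] at e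
        have h3v : (3:F) * φ (Matrix.single i a (1:F)) a b = 0 := by
          linear_combination e
        have := (mul_eq_zero.mp h3v).resolve_left h3'
        simpa [hE] using this
      · rw [if_neg haj] at e
        have h2v : (2:F) * φ (Matrix.single i j (1:F)) a b = 0 := by
          linear_combination e
        have := (mul_eq_zero.mp h2v).resolve_left h2'
        simpa [hE] using this
    -- Lemma B : independence of the auxiliary row index
    have lemB : ∀ (i j k : Fin n), i ≠ j → j ≠ k → i ≠ k → ∀ b : Fin m,
        φ (E i k) i b = φ (E j k) j b := by
      intro i j k hij hjk hik b
      have key := h (E i j) (E j k) (htE i j hij) (htE j k hjk)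
      have hcomm : E i j * E j k - E j k * E i j = E i k := by
        have m1 := Matrix.single_mul_single_same (1:F) i j k (1:F)
        have m2 := (Matrix.single_mul_single_of_ne (1:F) j k i hik.symm (1:F) : Matrix.single j k (1:F) * Matrix.single i j (1:F) = 0)
        simp [hE, m1, m2]
      rw [hcomm] at key
      have e := congrArg (fun M => M i b) key
      simp [hE, Matrix.sub_apply, mulE_apply, hij] at e
      simpa [hE] using e
    -- the candidate matrix X
    set i0 : Fin n := ⟨0, by omega⟩ with hi0
    set i1 : Fin n := ⟨1, by omega⟩ with hi1
    have hi01 : i0 ≠ i1 := by simp [hi0, hi1, Fin.ext_iff]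
    set p : Fin n → Fin n := fun k => if k = i0 then i1 else i0 with hpdef
    have hp : ∀ k, p k ≠ k := by
      intro k
      by_cases hk : k = i0
      · subst hk; simp [hpdef, hi01.symm]
      · simp [hpdef, hk, Ne.symm hk]
    set X : Matrix (Fin n) (Fin m) F :=
      Matrix.of (fun k b => φ (E (p k) k) (p k) b) with hX
    -- Lemma C : φ(E i j) = E i j * X for i ≠ j
    have lemC : ∀ (i j : Fin n), i ≠ j → φ (E i j) = E i j * X := by
      intro i j hij
      ext a b
      rw [show (E i j * X) a b = if a = i then X j b else 0 from mulE_apply i j X a b]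
      by_cases hai : a = i
      · subst hai
        rw [if_pos rfl]
        show φ (E a j) a b = φ (E (p j) j) (p j) b
        by_cases hpi : p j = a
        · rw [hpi]
        · exact lemB a (p j) j (Ne.symm hpi) (hp j) hij b
      · rw [if_neg hai]
        exact lemA i j hij a b hai
    -- Lemma D : φ(E i i - E j j) = (E i i - E j j) * X for i ≠ j
    have lemD : ∀ (i j : Fin n), i ≠ j → φ (E i i - E j j) = (E i i - E j j) * X := by
      intro i j hij
      have key := h (E i j) (E j i) (htE i j hij) (htE j i hij.symm)
      have hcomm : E i j * E j i - E j i * E i j = E i i - E j j := by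
        simp [hE]
      rw [hcomm] at key
      rw [key, lemC i j hij, lemC j i hij.symm, ← Matrix.mul_assoc, ← Matrix.mul_assoc,
        ← Matrix.sub_mul, hcomm]
    -- assemble
    refine ⟨X, fun C hC => ?_⟩
    set ρ : Matrix (Fin n) (Fin n) F →ₗ[F] Matrix (Fin n) (Fin m) F :=
      { toFun := fun C => C * X
        map_add' := fun A B => by simp [Matrix.add_mul]
        map_smul' := fun c A => by simp [Matrix.smul_mul] } with hρ
    set ψ : Matrix (Fin n) (Fin n) F →ₗ[F] Matrix (Fin n) (Fin m) F := φ - ρ with hψ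
    have hψapp : ∀ D, ψ D = φ D - D * X := fun D => rfl
    have hE0 : ∀ i j : Fin n, i ≠ j → ψ (E i j) = 0 := by
      intro i j hij
      rw [hψapp, lemC i j hij, sub_self]
    have hD0 : ∀ i : Fin n, ψ (E i i) = ψ (E i0 i0) := by
      intro i
      by_cases hi : i = i0
      · rw [hi]
      · have hz : ψ (E i i - E i0 i0) = 0 := by
          rw [hψapp, lemD i i0 hi, sub_self]
        rw [map_sub] at hz
        exact sub_eq_zero.mp hz
    have hgoal : ψ C = 0 := by
      have hrep : ψ C = ∑ i : Fin n, ∑ j : Fin n, C i j • ψ (E i j) := by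
        conv_lhs => rw [Matrix.matrix_eq_sum_single C]
        rw [map_sum]
        refine Finset.sum_congr rfl fun i _ => ?_
        rw [map_sum]
        refine Finset.sum_congr rfl fun j _ => ?_
        rw [show Matrix.single i j (C i j) = C i j • E i j by simp [hE], LinearMap.map_smul]
      rw [hrep]
      have hrow : ∀ i : Fin n, ∑ j : Fin n, C i j • ψ (E i j) = C i i • ψ (E i0 i0) := by
        intro i
        rw [Finset.sum_eq_single i (fun j _ hji => by rw [hE0 i j (Ne.symm hji), smul_zero])
          (fun habs => absurd (Finset.mem_univ i) habs)]
        rw [hD0 i]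
      rw [Finset.sum_congr rfl fun i _ => hrow i, ← Finset.sum_smul]
      have htr : (∑ i : Fin n, C i i) = C.trace := by simp [Matrix.trace, Matrix.diag]
      rw [htr, hC, zero_smul]
    rw [hψapp] at hgoal
    exact sub_eq_zero.mp hgoal
  · -- n = 1
    have hn1 : n = 1 := by omega
    subst hn1
    refine ⟨0, fun C hC => ?_⟩
    have hC00 : C 0 0 = 0 := by
      simpa [Matrix.trace, Matrix.diag, Fin.sum_univ_one] using hC
    have hC0 : C = 0 := by
      ext a b
      rw [Fin.fin_one_eq_zero a, Fin.fin_one_eq_zero b, hC00]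
      rfl
    rw [hC0]
    simp
end

section
/- Let F be a field with characteristic different from 2 and 3, let n ≥ 1 and m ≥ 1. If a linear map φ : sl_n(F) → M_{m×n}(F) satisfies φ(AB − BA) = φ(A)·B − φ(B)·A for all A, B ∈ sl_n(F), then there exists X ∈ M_{m×n}(F) such that φ(C) = X·C for all C ∈ sl_n(F). -/
theorem stmt6 (F : Type*) [Field F] (h2 : ringChar F ≠ 2) (h3 : ringChar F ≠ 3)
    (n m : ℕ) (hn : 1 ≤ n) (hm : 1 ≤ m)
    (φ : Matrix (Fin n) (Fin n) F →ₗ[F] Matrix (Fin m) (Fin n) F)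
    (h : ∀ A B : Matrix (Fin n) (Fin n) F, A.trace = 0 → B.trace = 0 →
      φ (A * B - B * A) = φ A * B - φ B * A) :
    ∃ X : Matrix (Fin m) (Fin n) F,
      ∀ C : Matrix (Fin n) (Fin n) F, C.trace = 0 → φ C = X * C := by
  have h2' : (2 : F) ≠ 0 := Ring.two_ne_zero h2
  have h3' : (3 : F) ≠ 0 := by
    rw [Ne, (by norm_cast : (3 : F) = ((3 : ℕ) : F)), ringChar.spec,
      Nat.dvd_prime Nat.prime_three]
    exact mt (or_iff_left h3).mp CharP.ringChar_ne_one
  rcases Nat.lt_or_ge n 2 with hn2 | hn2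
  · -- case n = 1 : every traceless matrix is 0
    have hn1 : n = 1 := by omega
    subst hn1
    refine ⟨0, fun C hC => ?_⟩
    have hC0 : C = 0 := by
      ext i j
      fin_cases i; fin_cases j
      simpa [Matrix.trace_fin_one] using hC
    rw [hC0]
    simp
  · -- case n ≥ 2
    set z : Fin n := ⟨0, by omega⟩ with hz
    set o : Fin n := ⟨1, by omega⟩ with ho
    have hzo : z ≠ o := by simp [hz, ho, Fin.ext_iff]
    set σ : Fin n → Fin n := fun i => if i = z then o else z with hσdef
    have hσ : ∀ i, σ i ≠ i := by
      intro i
      by_cases hi : i = z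
      · simp [hσdef, hi, hzo.symm]
      · simp [hσdef, hi, Ne.symm hi]
    set E : Fin n → Fin n → Matrix (Fin n) (Fin n) F :=
      fun i j => Matrix.single i j (1 : F) with hE
    -- multiplication facts
    have Emul_same : ∀ a b c : Fin n, E a b * E b c = E a c := by
      intro a b c; simp [hE]
    have Emul_ne : ∀ a b c d : Fin n, b ≠ c → E a b * E c d = 0 := by
      intro a b c d hbc
      simp only [hE]
      exact Matrix.single_mul_single_of_ne 1 a b c hbc 1
    have Ecol : ∀ (a b : Fin n) (M : Matrix (Fin m) (Fin n) F) (r : Fin m) (l : Fin n),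
        (M * E a b) r l = if l = b then M r a else 0 := by
      intro a b M r l
      by_cases hlb : l = b
      · subst hlb
        simp [hE, Matrix.mul_apply, Matrix.single, Finset.sum_ite_eq]
      · simp [hE, Matrix.mul_apply, Matrix.single, hlb, Ne.symm hlb]
    have trE : ∀ i j : Fin n, i ≠ j → (E i j).trace = 0 := by
      intro i j hij
      exact Matrix.trace_single_eq_of_ne i j 1 hij
    have trD : ∀ i j : Fin n, (E i i - E j j).trace = 0 := by
      intro i j
      simp [hE, Matrix.trace_sub, Matrix.trace_single_eq_same]
    have hsb : ∀ (i j : Fin n) (c : F), Matrix.single i j c = c • E i j := by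
      intro i j c
      rw [hE, Matrix.smul_single, smul_eq_mul, mul_one]
    -- Step 1: the columns of φ(E i j) other than column j vanish
    have step1 : ∀ i j : Fin n, i ≠ j → ∀ (r : Fin m) (l : Fin n), l ≠ j →
        φ (E i j) r l = 0 := by
      intro i j hij r l hl
      have hcomm : (E i i - E j j) * E i j - E i j * (E i i - E j j) = E i j + E i j := by
        rw [sub_mul, mul_sub, Emul_same i i j, Emul_ne j j i j (Ne.symm hij),
          Emul_ne i j i i (Ne.symm hij), Emul_same i j j]
        abel
      have heq := h _ _ (trD i j) (trE i j hij)
      rw [hcomm] at heq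
      have hentry := congrFun (congrFun heq r) l
      rw [map_add] at hentry
      simp only [Matrix.add_apply, Matrix.mul_sub, Matrix.sub_apply, Ecol] at hentry
      by_cases hli : l = i
      · subst hli
        rw [if_neg hl, if_pos rfl, if_neg hl] at hentry
        have h30 : (3 : F) * φ (E l j) r l = 0 := by linear_combination hentry
        exact (mul_eq_zero.mp h30).resolve_left h3'
      · rw [if_neg hl, if_neg hli, if_neg hl] at hentry
        have h20 : (2 : F) * φ (E i j) r l = 0 := by linear_combination hentry
        exact (mul_eq_zero.mp h20).resolve_left h2'
    -- Step 2: the value φ(E i j) r j does not depend on j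
    have step2 : ∀ i k j : Fin n, i ≠ k → k ≠ j → i ≠ j → ∀ r : Fin m,
        φ (E i j) r j = φ (E i k) r k := by
      intro i k j hik hkj hij r
      have hcomm : E i k * E k j - E k j * E i k = E i j := by
        rw [Emul_same i k j, Emul_ne k j i k (Ne.symm hij), sub_zero]
      have heq := h _ _ (trE i k hik) (trE k j hkj)
      rw [hcomm] at heq
      have hentry := congrFun (congrFun heq r) j
      rw [Matrix.sub_apply, Ecol, Ecol, if_pos rfl, if_neg (Ne.symm hkj), sub_zero] at hentry
      exact hentry
    -- the candidate matrix X
    set X : Matrix (Fin m) (Fin n) F :=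
      Matrix.of (fun r i => φ (E i (σ i)) r (σ i)) with hXdef
    have hX : ∀ i j : Fin n, i ≠ j → ∀ r : Fin m, φ (E i j) r j = X r i := by
      intro i j hij r
      by_cases hj : j = σ i
      · rw [hj]; rfl
      · exact step2 i (σ i) j (Ne.symm (hσ i)) (Ne.symm hj) hij r
    have key_off : ∀ i j : Fin n, i ≠ j → φ (E i j) = X * E i j := by
      intro i j hij
      ext r l
      rw [Ecol]
      by_cases hl : l = j
      · rw [if_pos hl, hl, hX i j hij r]
      · rw [if_neg hl, step1 i j hij r l hl]
    have key_D : ∀ i j : Fin n, i ≠ j → φ (E i i - E j j) = X * (E i i - E j j) := by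
      intro i j hij
      have hcomm : E i j * E j i - E j i * E i j = E i i - E j j := by
        rw [Emul_same i j i, Emul_same j i j]
      have heq := h _ _ (trE i j hij) (trE j i hij.symm)
      rw [hcomm] at heq
      rw [heq, key_off i j hij, key_off j i hij.symm, Matrix.mul_assoc, Matrix.mul_assoc,
        ← Matrix.mul_sub, hcomm]
    have hψ : ∀ i : Fin n, φ (E i i) - X * E i i = φ (E z z) - X * E z z := by
      intro i
      by_cases hi : i = z
      · rw [hi]
      · have hd := key_D i z hi
        rw [map_sub, Matrix.mul_sub, sub_eq_sub_iff_sub_eq_sub] at hd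
        exact hd
    refine ⟨X, fun C hC => ?_⟩
    have hrepr := Matrix.matrix_eq_sum_single C
    have hφ : φ C = ∑ i, ∑ j, (C i j) • φ (E i j) := by
      conv_lhs => rw [hrepr]
      simp only [map_sum, hsb, map_smul]
    have hX2 : X * C = ∑ i, ∑ j, (C i j) • (X * E i j) := by
      conv_lhs => rw [hrepr]
      simp only [Matrix.mul_sum, hsb, Matrix.mul_smul]
    rw [← sub_eq_zero, hφ, hX2, ← Finset.sum_sub_distrib]
    simp only [← Finset.sum_sub_distrib, ← smul_sub]
    have hdiag : ∀ i : Fin n,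
        (∑ j, (C i j) • (φ (E i j) - X * E i j))
          = C i i • (φ (E z z) - X * E z z) := by
      intro i
      rw [Finset.sum_eq_single i]
      · rw [hψ i]
      · intro j _ hj
        rw [key_off i j (Ne.symm hj), sub_self, smul_zero]
      · intro hi
        exact absurd (Finset.mem_univ i) hi
    rw [Finset.sum_congr rfl (fun i _ => hdiag i), ← Finset.sum_smul]
    have htr : (∑ i, C i i) = 0 := by
      simpa [Matrix.trace, Matrix.diag] using hC
    rw [htr, zero_smul]
end

section
/- Let F be a field with characteristic 3. Define φ : sl_2(F) → M_2(F) by φ(E_{12}) = E_{21}, φ(E_{21}) = 0, and φ(H) = 0 where H = E_{11} − E_{22}. Then φ satisfies φ(AB − BA) = A·φ(B) − B·φ(A) for all A, B ∈ sl_2(F), yet there is no matrix X ∈ M_2(F) with φ(C) = C·X for all C ∈ sl_2(F). -/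
theorem stmt7 (F : Type*) [Field F] [CharP F 3]
    (φ : Matrix (Fin 2) (Fin 2) F →ₗ[F] Matrix (Fin 2) (Fin 2) F)
    (h12 : φ (Matrix.single 0 1 1) = Matrix.single 1 0 1)
    (h21 : φ (Matrix.single 1 0 1) = 0)
    (hH : φ (Matrix.single 0 0 1 - Matrix.single 1 1 1) = 0) :
    (∀ A B : Matrix (Fin 2) (Fin 2) F, A.trace = 0 → B.trace = 0 →
      φ (A * B - B * A) = A * φ B - B * φ A) ∧
    ¬ ∃ X : Matrix (Fin 2) (Fin 2) F,
        ∀ C : Matrix (Fin 2) (Fin 2) F, C.trace = 0 → φ C = C * X := by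
  have h3 : (3 : F) = 0 := CharP.cast_eq_zero F 3
  have key : ∀ A : Matrix (Fin 2) (Fin 2) F, A.trace = 0 →
      φ A = A 0 1 • Matrix.single 1 0 1 := by
    intro A hA
    have hA11 : A 1 1 = -A 0 0 := by
      rw [Matrix.trace_fin_two] at hA
      linear_combination hA
    have hrep : A = A 0 1 • Matrix.single 0 1 1
        + A 1 0 • Matrix.single 1 0 1
        + A 0 0 • (Matrix.single 0 0 1 - Matrix.single 1 1 1) := by
      ext i j
      fin_cases i <;> fin_cases j <;>
        simp [Matrix.single, hA11]
    calc φ A = φ (A 0 1 • Matrix.single 0 1 1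
        + A 1 0 • Matrix.single 1 0 1
        + A 0 0 • (Matrix.single 0 0 1 - Matrix.single 1 1 1)) := by
          rw [← hrep]
      _ = A 0 1 • Matrix.single 1 0 1 := by
          rw [map_add, map_add, map_smul, map_smul, map_smul, h12, h21, hH]
          simp
  constructor
  · intro A B hA hB
    have hA11 : A 1 1 = -A 0 0 := by
      rw [Matrix.trace_fin_two] at hA; linear_combination hA
    have hB11 : B 1 1 = -B 0 0 := by
      rw [Matrix.trace_fin_two] at hB; linear_combination hB
    have hC : (A * B - B * A).trace = 0 := by
      simp [Matrix.trace_mul_comm A B]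
    rw [key _ hC, key A hA, key B hB]
    have h6 : (6 : F) = 0 := by linear_combination 2 * h3
    ext i j
    fin_cases i <;> fin_cases j <;>
      simp [Matrix.mul_apply, Fin.sum_univ_two, Matrix.single, hA11, hB11] <;>
      first
      | rfl
      | (rw [← sub_eq_zero]; ring_nf; try simp [h3, h6])
  · rintro ⟨X, hX⟩
    have h := hX (Matrix.single 0 1 1) (by simp [Matrix.trace_fin_two])
    rw [h12] at h
    have := congrArg (fun M => M 1 0) h
    simp [Matrix.mul_apply, Fin.sum_univ_two, Matrix.single] at this
end

section
/- Let F be a field and n ≥ 2, and fix 1 ≤ p < n. Let L = {(A B; 0 0)} ⊂ gl_n(F) be the Lie subalgebra of matrices with arbitrary p × p block A, arbitrary p × (n−p) block B, and zero bottom rows. Then the centralizer of L in gl_n(F) is exactly the scalar matrices F·I_n. -/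
theorem stmt12 (F : Type*) [Field F] (n p : ℕ) (hn : 2 ≤ n) (hp : 1 ≤ p) (hpn : p < n) :
    {X : Matrix (Fin n) (Fin n) F |
      ∀ B : Matrix (Fin n) (Fin n) F,
        (∀ i j : Fin n, p ≤ (i : ℕ) → B i j = 0) → X * B = B * X} =
    {X : Matrix (Fin n) (Fin n) F | ∃ c : F, X = c • (1 : Matrix (Fin n) (Fin n) F)} := by
  ext X
  simp only [Set.mem_setOf_eq]
  constructor
  · intro h
    set i0 : Fin n := ⟨0, by omega⟩ with hi0
    have key : ∀ (i j a b : Fin n), (i : ℕ) < p →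
        (if b = j then X a i else 0) = (if a = i then X j b else 0) := by
      intro i j a b hi
      have hB : ∀ r c : Fin n, p ≤ (r : ℕ) → Matrix.single i j (1 : F) r c = 0 := by
        intro r c hr
        rw [Matrix.single]
        simp only [Matrix.of_apply, ite_eq_right_iff, one_ne_zero]
        rintro ⟨rfl, rfl⟩
        omega
      have := congrFun (congrFun (h _ hB) a) b
      simpa [Matrix.mul_apply, Matrix.single, ite_and, Finset.sum_ite_eq,
        Finset.sum_ite_eq', eq_comm] using this
    have hoff : ∀ a b : Fin n, a ≠ b → X a b = 0 := by
      intro a b hab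
      have := key i0 a i0 b (by simp [hi0]; omega)
      simp only [if_neg (fun hba : b = a => hab hba.symm), hi0] at this
      simpa using this.symm
    have hdiag : ∀ j : Fin n, X j j = X i0 i0 := by
      intro j
      have := key i0 j i0 j (by simp [hi0]; omega)
      simpa using this.symm
    refine ⟨X i0 i0, ?_⟩
    ext a b
    by_cases hab : a = b
    · subst hab
      simp [Matrix.one_apply, hdiag a]
    · simp [Matrix.one_apply, hab, hoff a b hab]
  · rintro ⟨c, rfl⟩ B _
    simp [Matrix.smul_mul, Matrix.mul_smul]
end

section
/- Let F be a field, n ≥ 3, and fix 1 < j ≤ i < n. Let L ⊂ gl_n(F) be the subspace of matrices whose only possibly nonzero blocks, with respect to the partition (j−1, i−j+1, n−i) of n, are the (1,2), (1,3), (2,2), and (2,3) blocks. Then the centralizer of L in gl_n(F) equals F·I_n + W, where W is the subspace of matrices whose only nonzero block is the (1,3) block. -/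
open Matrix

theorem stmt13 (F : Type*) [Field F] (n i j : ℕ)
    (hn : 3 ≤ n) (hj : 1 < j) (hji : j ≤ i) (hin : i < n) :
    {X : Matrix (Fin n) (Fin n) F |
      ∀ B : Matrix (Fin n) (Fin n) F,
        (∀ r c : Fin n, ¬((r : ℕ) < i ∧ j - 1 ≤ (c : ℕ)) → B r c = 0) →
        X * B = B * X} =
    {X : Matrix (Fin n) (Fin n) F |
      ∃ (c : F) (Y : Matrix (Fin n) (Fin n) F),
        (∀ r s : Fin n, ¬((r : ℕ) < j - 1 ∧ i ≤ (s : ℕ)) → Y r s = 0) ∧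
        X = c • (1 : Matrix (Fin n) (Fin n) F) + Y} := by
  ext X
  simp only [Set.mem_setOf_eq]
  constructor
  · intro h
    have hjn : j - 1 < n := by omega
    have h0n : 0 < n := by omega
    have key : ∀ r c : Fin n, (r : ℕ) < i → j - 1 ≤ (c : ℕ) →
        X * single r c (1 : F) = single r c (1 : F) * X := by
      intro r c hr hc
      apply h
      intro r' c' hrc
      simp only [single, of_apply]
      split_ifs with hh
      · exact absurd ⟨hh.1 ▸ hr, hh.2 ▸ hc⟩ hrc
      · rfl
    have h1 : ∀ p r : Fin n, (r : ℕ) < i → p ≠ r → X p r = 0 := by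
      intro p r hr hpr
      have hc : j - 1 ≤ ((⟨j - 1, hjn⟩ : Fin n) : ℕ) := le_refl _
      have := congrFun (congrFun (key r ⟨j - 1, hjn⟩ hr hc) p) ⟨j - 1, hjn⟩
      rw [Matrix.mul_single_apply_same,
        Matrix.single_mul_apply_of_ne _ _ _ _ _ hpr] at this
      simpa using this
    have h2 : ∀ c q : Fin n, j - 1 ≤ (c : ℕ) → q ≠ c → X c q = 0 := by
      intro c q hc hqc
      have hr0 : ((⟨0, h0n⟩ : Fin n) : ℕ) < i := by simp; omega
      have := congrFun (congrFun (key ⟨0, h0n⟩ c hr0 hc) ⟨0, h0n⟩) q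
      rw [Matrix.mul_single_apply_of_ne _ _ _ _ _ hqc,
        Matrix.single_mul_apply_same] at this
      simpa using this.symm
    have h3 : ∀ r c : Fin n, (r : ℕ) < i → j - 1 ≤ (c : ℕ) → X r r = X c c := by
      intro r c hr hc
      have := congrFun (congrFun (key r c hr hc) r) c
      rw [Matrix.mul_single_apply_same,
        Matrix.single_mul_apply_same] at this
      simpa using this
    set r0 : Fin n := ⟨0, h0n⟩ with hr0def
    have hr0i : ((r0 : Fin n) : ℕ) < i := by simp [hr0def]; omega
    have hmi : ((⟨j - 1, hjn⟩ : Fin n) : ℕ) < i := by simp; omega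
    have hdiag : ∀ k : Fin n, X k k = X r0 r0 := by
      intro k
      by_cases hk : (k : ℕ) < i
      · rw [h3 k ⟨j - 1, hjn⟩ hk le_rfl]
        exact (h3 r0 ⟨j - 1, hjn⟩ hr0i le_rfl).symm
      · exact (h3 r0 k hr0i (by omega)).symm
    refine ⟨X r0 r0, X - X r0 r0 • 1, ?_, by abel⟩
    intro r s hrs
    simp only [Matrix.sub_apply, Matrix.smul_apply, one_apply, smul_eq_mul]
    by_cases hreq : r = s
    · subst hreq
      simp [hdiag r]
    · rw [if_neg hreq, mul_zero, sub_zero]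
      by_cases hr : j - 1 ≤ (r : ℕ)
      · exact h2 r s hr (fun e => hreq e.symm)
      · have hs : (s : ℕ) < i := by omega
        exact h1 r s hs hreq
  · rintro ⟨c, Y, hY, rfl⟩ B hB
    have hYB : Y * B = 0 := by
      ext p q
      rw [mul_apply]
      refine Finset.sum_eq_zero fun k _ => ?_
      by_cases hk : i ≤ (k : ℕ)
      · rw [hB k q (by omega), mul_zero]
      · rw [hY p k (by omega), zero_mul]
    have hBY : B * Y = 0 := by
      ext p q
      rw [mul_apply]
      refine Finset.sum_eq_zero fun k _ => ?_
      by_cases hk : (k : ℕ) < j - 1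
      · rw [hB p k (by omega), zero_mul]
      · rw [hY k q (by omega), mul_zero]
    rw [add_mul, mul_add, hYB, hBY, add_zero, add_zero, Matrix.smul_mul,
      Matrix.mul_smul, one_mul, mul_one]
end

section
/- Let F be a field with char(F) ≠ 2, and n ≥ 2, 1 ≤ p < n. Let L = {(A B; 0 0) : A ∈ M_p(F), B ∈ M_{p×(n−p)}(F)} ⊂ gl_n(F). Then every derivation f of the Lie algebra L is of the form f = ad(X)|_L for some block upper triangular matrix X = (X_{11} X_{12}; 0 X_{22}) ∈ gl_n(F). -/
open Matrix

theorem stmt14 (F : Type*) [Field F] (hchar : ringChar F ≠ 2)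
    (n p : ℕ) (hn : 2 ≤ n) (hp : 1 ≤ p) (hpn : p < n)
    (f : Matrix (Fin n) (Fin n) F →ₗ[F] Matrix (Fin n) (Fin n) F)
    (hmap : ∀ A : Matrix (Fin n) (Fin n) F,
      (∀ i j : Fin n, p ≤ (i : ℕ) → A i j = 0) →
      ∀ i j : Fin n, p ≤ (i : ℕ) → f A i j = 0)
    (hder : ∀ A B : Matrix (Fin n) (Fin n) F,
      (∀ i j : Fin n, p ≤ (i : ℕ) → A i j = 0) →
      (∀ i j : Fin n, p ≤ (i : ℕ) → B i j = 0) →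
      f (A * B - B * A) = (f A * B - B * f A) + (A * f B - f B * A)) :
    ∃ X : Matrix (Fin n) (Fin n) F,
      (∀ i j : Fin n, p ≤ (i : ℕ) → (j : ℕ) < p → X i j = 0) ∧
      ∀ A : Matrix (Fin n) (Fin n) F,
        (∀ i j : Fin n, p ≤ (i : ℕ) → A i j = 0) → f A = X * A - A * X := by
  classical
  have hn0 : 0 < n := lt_of_lt_of_le (by norm_num) hn
  set z : Fin n := ⟨0, hn0⟩ with hzdef
  set P : Fin n := ⟨p, hpn⟩ with hPdef
  have hzval : (z : ℕ) = 0 := rfl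
  have hPval : (P : ℕ) = p := rfl
  set sb : Fin n → Fin n → Matrix (Fin n) (Fin n) F :=
    fun i j => Matrix.single i j (1 : F) with hsbdef
  have hsbe : ∀ i j r s : Fin n, sb i j r s = if r = i ∧ s = j then (1 : F) else 0 := by
    intro i j r s
    simp only [hsbdef, Matrix.single, of_apply]
    exact if_congr (by constructor <;> rintro ⟨rfl, rfl⟩ <;> exact ⟨rfl, rfl⟩) rfl rfl
  have hm1 : ∀ (M : Matrix (Fin n) (Fin n) F) (i j r s : Fin n),
      (M * sb i j) r s = if s = j then M r i else 0 := by
    intro M i j r s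
    rw [Matrix.mul_apply]
    rcases eq_or_ne s j with rfl | hs
    · simp only [if_pos rfl]
      rw [Finset.sum_eq_single i]
      · rw [hsbe]; simp
      · intro k _ hk; rw [hsbe]; simp [hk]
      · simp
    · rw [if_neg hs]
      apply Finset.sum_eq_zero
      intro k _; rw [hsbe]; simp [hs]
  have hm2 : ∀ (M : Matrix (Fin n) (Fin n) F) (i j r s : Fin n),
      (sb i j * M) r s = if r = i then M j s else 0 := by
    intro M i j r s
    rw [Matrix.mul_apply]
    rcases eq_or_ne r i with rfl | hr
    · simp only [if_pos rfl]
      rw [Finset.sum_eq_single j]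
      · rw [hsbe]; simp
      · intro k _ hk; rw [hsbe]; simp [hk]
      · simp
    · rw [if_neg hr]
      apply Finset.sum_eq_zero
      intro k _; rw [hsbe]; simp [hr]
  have hsbL : ∀ i j : Fin n, (i : ℕ) < p →
      ∀ k l : Fin n, p ≤ (k : ℕ) → sb i j k l = 0 := by
    intro i j hi k l hk
    rw [hsbe]
    have : k ≠ i := by intro h; rw [h] at hk; omega
    simp [this]
  have hfsbL : ∀ i j : Fin n, (i : ℕ) < p →
      ∀ k l : Fin n, p ≤ (k : ℕ) → f (sb i j) k l = 0 :=
    fun i j hi => hmap _ (hsbL i j hi)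
  -- the idempotent E
  set E : Matrix (Fin n) (Fin n) F :=
    Matrix.of (fun i j => if i = j ∧ (i : ℕ) < p then (1 : F) else 0) with hEdef
  have hEe : ∀ i j : Fin n, E i j = if i = j ∧ (i : ℕ) < p then (1 : F) else 0 := by
    intro i j; rfl
  have hEL : ∀ i j : Fin n, p ≤ (i : ℕ) → E i j = 0 := by
    intro i j hi; rw [hEe]
    have : ¬ ((i : ℕ) < p) := by omega
    simp [this]
  have hEmul : ∀ M : Matrix (Fin n) (Fin n) F,
      (∀ i j : Fin n, p ≤ (i : ℕ) → M i j = 0) → E * M = M := by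
    intro M hM
    ext r s
    rw [Matrix.mul_apply]
    rcases lt_or_ge (r : ℕ) p with hr | hr
    · rw [Finset.sum_eq_single r]
      · rw [hEe]; simp [hr]
      · intro k _ hk; rw [hEe]; simp [Ne.symm hk]
      · simp
    · rw [hM r s hr]
      apply Finset.sum_eq_zero
      intro k _
      rw [hEe]
      rcases eq_or_ne r k with rfl | hk
      · have : ¬ ((r : ℕ) < p) := by omega
        simp [this]
      · simp [hk]
  have hmulE : ∀ (M : Matrix (Fin n) (Fin n) F) (r s : Fin n),
      (M * E) r s = if (s : ℕ) < p then M r s else 0 := by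
    intro M r s
    rw [Matrix.mul_apply]
    rcases lt_or_ge (s : ℕ) p with hs | hs
    · rw [if_pos hs, Finset.sum_eq_single s]
      · rw [hEe]; simp [hs]
      · intro k _ hk; rw [hEe]; simp [hk]
      · simp
    · rw [if_neg (by omega)]
      apply Finset.sum_eq_zero
      intro k _
      rw [hEe]
      rcases eq_or_ne k s with rfl | hk
      · have : ¬ ((k : ℕ) < p) := by omega
        simp [this]
      · simp [hk]
  set Q : Matrix (Fin n) (Fin n) F := f E with hQdef
  have hQL : ∀ i j : Fin n, p ≤ (i : ℕ) → Q i j = 0 := hmap E hEL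
  -- (*) for a basis element of the first block, entrywise
  have hstar : ∀ a b : Fin n, (a : ℕ) < p → (b : ℕ) < p → ∀ r s : Fin n,
      (f (sb a b) * E) r s
        = (Q * sb a b) r s - (sb a b * Q) r s + f (sb a b) r s := by
    intro a b ha hb r s
    have hEsb : E * sb a b = sb a b := hEmul _ (hsbL a b ha)
    have hsbE : sb a b * E = sb a b := by
      ext u v
      rw [hmulE]
      rcases lt_or_ge (v : ℕ) p with hv | hv
      · simp [hv]
      · rw [if_neg (by omega), hsbe]
        have : v ≠ b := by intro h; rw [h] at hv; omega
        simp [this]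
    have h := hder E (sb a b) hEL (hsbL a b ha)
    rw [hEsb, hsbE, sub_self, map_zero, hEmul _ (hfsbL a b ha)] at h
    have h' := congrFun (congrFun h r) s
    have he : (Q * sb a b - sb a b * Q + (f (sb a b) - f (sb a b) * E)) r s
        = (Q * sb a b) r s - (sb a b * Q) r s
          + (f (sb a b) r s - (f (sb a b) * E) r s) := rfl
    rw [he] at h'
    have h0 : (0 : Matrix (Fin n) (Fin n) F) r s = 0 := rfl
    rw [h0] at h'
    linear_combination h'
  have hstar2 : ∀ a b : Fin n, (a : ℕ) < p → p ≤ (b : ℕ) → ∀ r s : Fin n,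
      (f (sb a b) * E) r s = (Q * sb a b) r s - (sb a b * Q) r s := by
    intro a b ha hb r s
    have hEsb : E * sb a b = sb a b := hEmul _ (hsbL a b ha)
    have hsbE : sb a b * E = 0 := by
      ext u v
      rw [hmulE]
      rcases lt_or_ge (v : ℕ) p with hv | hv
      · rw [if_pos hv, hsbe]
        have : v ≠ b := by intro h; rw [h] at hv; omega
        simp [this]
      · rw [if_neg (by omega)]; rfl
    have h := hder E (sb a b) hEL (hsbL a b ha)
    rw [hEsb, hsbE, sub_zero, hEmul _ (hfsbL a b ha)] at h
    have h' := congrFun (congrFun h r) s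
    have he : (Q * sb a b - sb a b * Q + (f (sb a b) - f (sb a b) * E)) r s
        = (Q * sb a b) r s - (sb a b * Q) r s
          + (f (sb a b) r s - (f (sb a b) * E) r s) := rfl
    rw [he] at h'
    linear_combination h'
  have hQzz : Q z z = 0 := by
    have h := hstar2 z P (by rw [hzval]; omega) (by rw [hPval]) z P
    rw [hmulE, if_neg (by rw [hPval]; omega), hm1, hm2, if_pos rfl, if_pos rfl,
        hQL P P (by rw [hPval])] at h
    linear_combination -h
  have hQ0 : ∀ r a : Fin n, (a : ℕ) < p → Q r a = 0 := by
    intro r a ha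
    rcases lt_or_ge (r : ℕ) p with hr | hr
    · have h := hstar a z ha (by rw [hzval]; omega) r z
      rw [hmulE, if_pos (by rw [hzval]; omega), hm1, hm2, if_pos rfl] at h
      rcases eq_or_ne r a with rfl | hra
      · rw [if_pos rfl, hQzz] at h
        linear_combination -h
      · rw [if_neg hra] at h
        linear_combination -h
    · exact hQL r a hr
  -- part-2 basis vectors have image with vanishing first-block columns
  have hS2 : ∀ i j : Fin n, (i : ℕ) < p → p ≤ (j : ℕ) →
      ∀ r s : Fin n, (s : ℕ) < p → f (sb i j) r s = 0 := by
    intro i j hi hj r s hs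
    have h := hstar2 i j hi hj r s
    rw [hmulE, if_pos hs, hm1, hm2] at h
    have hsj : s ≠ j := by intro hh; rw [hh] at hs; omega
    rw [if_neg hsj, hQL j s hj] at h
    simpa using h
  -- part-1 basis vectors: image entries in the second block columns
  have hS3 : ∀ i j : Fin n, (i : ℕ) < p → (j : ℕ) < p →
      ∀ r s : Fin n, p ≤ (s : ℕ) → f (sb i j) r s = if r = i then Q j s else 0 := by
    intro i j hi hj r s hs
    have h := hstar i j hi hj r s
    rw [hmulE, if_neg (by omega), hm1, hm2] at h
    have hsj : s ≠ j := by intro hh; rw [hh] at hs; omega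
    rw [if_neg hsj] at h
    rcases eq_or_ne r i with rfl | hri
    · rw [if_pos rfl] at h ⊢
      linear_combination -h
    · rw [if_neg hri] at h ⊢
      linear_combination -h
  -- the main structure relation
  have hC : ∀ a b i' j' : Fin n, (a : ℕ) < p → (b : ℕ) < p → (i' : ℕ) < p → p ≤ (j' : ℕ) →
      ∀ r s : Fin n,
      (if b = i' then f (sb a j') r s else 0)
        = (if s = j' then f (sb a b) r i' else 0)
          + (if r = a then f (sb i' j') b s else 0) := by
    intro a b i' j' ha hb hi' hj' r s
    have hprod1 : sb a b * sb i' j' = if b = i' then sb a j' else 0 := by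
      ext u v
      rcases eq_or_ne b i' with rfl | hbi
      · rw [if_pos rfl, hm1, hsbe, hsbe]
        by_cases hv : v = j' <;> by_cases hu : u = a <;> simp [hv, hu]
      · rw [if_neg hbi, hm1, hsbe]
        simp [Ne.symm hbi]
    have hprod2 : sb i' j' * sb a b = 0 := by
      ext u v
      rw [hm1, hsbe]
      have : a ≠ j' := by intro hh; rw [hh] at ha; omega
      by_cases hv : v = b <;> simp [hv, this]
    have h := hder (sb a b) (sb i' j') (hsbL a b ha) (hsbL i' j' hi')
    rw [hprod1, hprod2, sub_zero] at h
    have h := congrFun (congrFun h r) s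
    have hRHS : ((f (sb a b) * sb i' j' - sb i' j' * f (sb a b))
        + (sb a b * f (sb i' j') - f (sb i' j') * sb a b)) r s
        = (f (sb a b) * sb i' j') r s - (sb i' j' * f (sb a b)) r s
          + ((sb a b * f (sb i' j')) r s - (f (sb i' j') * sb a b) r s) := rfl
    rw [hRHS, hm1, hm2, hm1, hm2] at h
    have e1 : (if r = i' then f (sb a b) j' s else 0) = 0 := by
      rcases eq_or_ne r i' with rfl | hri'
      · rw [if_pos rfl, hfsbL a b ha j' s hj']
      · rw [if_neg hri']
    have e2 : (if s = b then f (sb i' j') r a else 0) = 0 := by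
      rcases eq_or_ne s b with rfl | hsb2
      · rw [if_pos rfl, hS2 i' j' hi' hj' r a ha]
      · rw [if_neg hsb2]
    rw [e1, e2, sub_zero, sub_zero] at h
    rcases eq_or_ne b i' with rfl | hbi
    · rw [if_pos rfl] at h ⊢
      exact h
    · rw [if_neg hbi, map_zero] at h
      rw [if_neg hbi]
      exact h
  -- off-diagonal-column entries are scalar-like
  have hL1 : ∀ i j : Fin n, (i : ℕ) < p → p ≤ (j : ℕ) → ∀ b s : Fin n, (b : ℕ) < p → s ≠ j →
      f (sb i j) b s = if b = i then f (sb z j) z s else 0 := by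
    intro i j hi hj b s hb hsj
    have h := hC z b i j (by rw [hzval]; omega) hb hi hj z s
    rw [if_neg hsj, if_pos rfl, zero_add] at h
    exact h.symm
  -- diagonal-column differences
  have hL2 : ∀ j : Fin n, p ≤ (j : ℕ) → ∀ a r : Fin n, (a : ℕ) < p → (r : ℕ) < p →
      f (sb a j) r j - f (sb a P) r P
        = if r = a then f (sb z j) z j - f (sb z P) z P else 0 := by
    intro j hj a r ha hr
    have h1 := hC a z z j ha (by rw [hzval]; omega) (by rw [hzval]; omega) hj r j
    have h2 := hC a z z P ha (by rw [hzval]; omega) (by rw [hzval]; omega)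
      (by rw [hPval]) r P
    rw [if_pos rfl, if_pos rfl] at h1
    rw [if_pos rfl, if_pos rfl] at h2
    rcases eq_or_ne r a with rfl | hra
    · rw [if_pos rfl] at h1 h2 ⊢
      linear_combination h1 - h2
    · rw [if_neg hra] at h1 h2 ⊢
      linear_combination h1 - h2
  -- the matrix X
  set X : Matrix (Fin n) (Fin n) F :=
    Matrix.of (fun r s =>
      if (r : ℕ) < p then
        (if (s : ℕ) < p then f (sb s P) r P else -(Q r s))
      else
        (if (s : ℕ) < p then 0
         else (if r = s then f (sb z P) z P else 0) - f (sb z r) z s)) with hXdef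
  have hXe : ∀ r s : Fin n, X r s =
      if (r : ℕ) < p then
        (if (s : ℕ) < p then f (sb s P) r P else -(Q r s))
      else
        (if (s : ℕ) < p then 0
         else (if r = s then f (sb z P) z P else 0) - f (sb z r) z s) := by
    intro r s; rfl
  refine ⟨X, ?_, ?_⟩
  · intro i j hi hj
    rw [hXe, if_neg (by omega), if_pos hj]
  intro A hA
  -- it suffices to check on basis elements
  have hbasis : ∀ i j : Fin n, (i : ℕ) < p →
      f (sb i j) = X * sb i j - sb i j * X := by
    intro i j hi
    ext r s
    have hRHS : (X * sb i j - sb i j * X) r s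
        = (X * sb i j) r s - (sb i j * X) r s := rfl
    rw [hRHS, hm1, hm2]
    rcases lt_or_ge (j : ℕ) p with hj | hj
    · -- j in first block
      rcases lt_or_ge (s : ℕ) p with hs | hs
      · rcases lt_or_ge (r : ℕ) p with hr | hr
        · -- Goal1 via hC
          have h := hC i j s P hi hj hs (by rw [hPval]) r P
          have hXri : X r i = f (sb i P) r P := by rw [hXe, if_pos hr, if_pos hi]
          have hXjs : X j s = f (sb s P) j P := by rw [hXe, if_pos hj, if_pos hs]
          rw [hXri, hXjs]
          rw [if_pos (rfl : P = P)] at h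
          rcases eq_or_ne s j with rfl | hsj
          · rw [if_pos rfl] at h ⊢
            rcases eq_or_ne r i with rfl | hri
            · rw [if_pos rfl] at h ⊢
              linear_combination -h
            · rw [if_neg hri] at h ⊢
              linear_combination -h
          · rw [if_neg (Ne.symm hsj)] at h
            rw [if_neg hsj]
            rcases eq_or_ne r i with rfl | hri
            · rw [if_pos rfl] at h ⊢
              linear_combination -h
            · rw [if_neg hri] at h ⊢
              linear_combination -h
        · -- r in second block: everything vanishes
          rw [hfsbL i j hi r s hr]
          have hXri : X r i = 0 := by rw [hXe, if_neg (by omega), if_pos hi]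
          have hri : r ≠ i := by intro hh; rw [hh] at hr; omega
          rw [hXri, if_neg hri]
          simp
      · -- s in second block, j in first: use hS3
        rw [hS3 i j hi hj r s hs]
        have hsj : s ≠ j := by intro hh; rw [hh] at hs; omega
        rw [if_neg hsj]
        have hXjs : X j s = -(Q j s) := by rw [hXe, if_pos hj, if_neg (by omega)]
        rw [hXjs]
        rcases eq_or_ne r i with rfl | hri
        · rw [if_pos rfl, if_pos rfl]; ring
        · rw [if_neg hri, if_neg hri]; ring
    · -- j in second block
      rcases lt_or_ge (r : ℕ) p with hr | hr
      · rcases lt_or_ge (s : ℕ) p with hs | hs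
        · -- both sides vanish
          rw [hS2 i j hi hj r s hs]
          have hsj : s ≠ j := by intro hh; rw [hh] at hs; omega
          rw [if_neg hsj]
          have hXjs : X j s = 0 := by rw [hXe, if_neg (by omega), if_pos hs]
          rw [hXjs]
          simp
        · rcases eq_or_ne s j with rfl | hsj
          · -- diagonal column: use hL2
            have h := hL2 s hj i r hi hr
            have hXri : X r i = f (sb i P) r P := by rw [hXe, if_pos hr, if_pos hi]
            have hXss : X s s = f (sb z P) z P - f (sb z s) z s := by
              rw [hXe, if_neg (by omega), if_neg (by omega), if_pos rfl]
            rw [if_pos rfl, hXri, hXss]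
            rcases eq_or_ne r i with rfl | hri
            · rw [if_pos rfl] at h ⊢
              linear_combination h
            · rw [if_neg hri] at h ⊢
              linear_combination h
          · -- off-diagonal column: use hL1
            rw [hL1 i j hi hj r s hr hsj, if_neg hsj]
            have hXjs : X j s = (if j = s then f (sb z P) z P else 0) - f (sb z j) z s := by
              rw [hXe, if_neg (by omega), if_neg (by omega)]
            rw [hXjs, if_neg (Ne.symm hsj)]
            rcases eq_or_ne r i with rfl | hri
            · rw [if_pos rfl, if_pos rfl]; ring
            · rw [if_neg hri, if_neg hri]; ring
      · -- r in second block
        rw [hfsbL i j hi r s hr]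
        have hri : r ≠ i := by intro hh; rw [hh] at hr; omega
        rw [if_neg hri]
        have hXri : X r i = 0 := by rw [hXe, if_neg (by omega), if_pos hi]
        rw [hXri]
        simp
  -- expand A in the standard basis
  have hAexp : A = ∑ i : Fin n, ∑ j : Fin n, A i j • sb i j := by
    conv_lhs => rw [matrix_eq_sum_single A]
    refine Finset.sum_congr rfl fun i _ => Finset.sum_congr rfl fun j _ => ?_
    simp only [hsbdef]
    rw [smul_single, smul_eq_mul, mul_one]
  have hfA : f A = ∑ i : Fin n, ∑ j : Fin n, A i j • f (sb i j) := by
    conv_lhs => rw [hAexp]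
    rw [map_sum]
    refine Finset.sum_congr rfl fun i _ => ?_
    rw [map_sum]
    refine Finset.sum_congr rfl fun j _ => ?_
    exact f.map_smul _ _
  have hXA : X * A - A * X = ∑ i : Fin n, ∑ j : Fin n,
      A i j • (X * sb i j - sb i j * X) := by
    conv_lhs => rw [hAexp]
    rw [Finset.mul_sum, Finset.sum_mul, ← Finset.sum_sub_distrib]
    refine Finset.sum_congr rfl fun i _ => ?_
    rw [Finset.mul_sum, Finset.sum_mul, ← Finset.sum_sub_distrib]
    refine Finset.sum_congr rfl fun j _ => ?_
    rw [mul_smul_comm, smul_mul_assoc, smul_sub]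
  rw [hfA, hXA]
  refine Finset.sum_congr rfl fun i _ => Finset.sum_congr rfl fun j _ => ?_
  rcases lt_or_ge (i : ℕ) p with hi | hi
  · rw [hbasis i j hi]
  · rw [hA i j hi, zero_smul, zero_smul]
end

section
/- Let F be a field with char(F) ≠ 2 and n ≥ 1. Every derivation f of the Lie algebra gl_n(F) has the form f(A) = [X, A] + c·tr(A)·I_n for some X ∈ gl_n(F) and c ∈ F. -/
open Matrix

namespace Stmt15Aux

variable {F : Type*} [Field F] {n : ℕ}
variable (f : Matrix (Fin n) (Fin n) F →ₗ[F] Matrix (Fin n) (Fin n) F)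

theorem half {F : Type*} [Field F] (h2 : (2:F) ≠ 0) {a b : F} (h : (2:F) * (a - b) = 0) :
    a = b := by
  rcases mul_eq_zero.mp h with h4 | h4
  · exact absurd h4 h2
  · exact sub_eq_zero.mp h4

theorem keyP (hder : ∀ A B : Matrix (Fin n) (Fin n) F,
      f (A * B - B * A) = (f A * B - B * f A) + (A * f B - f B * A))
    (i j m : Fin n) (hij : i ≠ j) :
    f (single i j (1:F)) =
      (f (single i m 1) * single m j 1 - single m j 1 * f (single i m 1)) +
      (single i m 1 * f (single m j 1) - f (single m j 1) * single i m 1) := by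
  have h := hder (single i m (1:F)) (single m j 1)
  rw [single_mul_single_same, single_mul_single_of_ne (1:F) m j i hij.symm 1, one_mul, sub_zero] at h
  exact h

theorem c1 (h2 : (2:F) ≠ 0)
    (hder : ∀ A B : Matrix (Fin n) (Fin n) F,
      f (A * B - B * A) = (f A * B - B * f A) + (A * f B - f B * A))
    (i j p q : Fin n) (hij : i ≠ j) (hpi : p ≠ i) (hqj : q ≠ j) :
    f (single i j (1:F)) p q = 0 := by
  have h := hder (single i j (1:F)) (single i i 1)
  rw [single_mul_single_of_ne (1:F) i j i hij.symm 1, single_mul_single_same, one_mul, zero_sub,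
    map_neg] at h
  have hpq := Matrix.ext_iff.mpr h p q
  by_cases hqi : q = i
  · rw [hqi]
    rw [hqi] at hpq
    simp [hpi, hqj, hij, Ne.symm hij, Matrix.add_apply, Matrix.sub_apply, Matrix.neg_apply] at hpq
    exact half h2 (by linear_combination -hpq)
  · simp [hpi, hqj, hqi, Matrix.add_apply, Matrix.sub_apply, Matrix.neg_apply] at hpq
    exact hpq

theorem wd (h2 : (2:F) ≠ 0)
    (hder : ∀ A B : Matrix (Fin n) (Fin n) F,
      f (A * B - B * A) = (f A * B - B * f A) + (A * f B - f B * A))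
    (i j j' p : Fin n) (hji : j ≠ i) (hj'i : j' ≠ i) (hpi : p ≠ i) :
    f (single i j (1:F)) p j = f (single i j' (1:F)) p j' := by
  rcases eq_or_ne j j' with rfl | hjj'
  · rfl
  · have h := keyP f hder i j' j hj'i.symm
    have hpq := Matrix.ext_iff.mpr h p j'
    by_cases hpj : p = j
    · subst hpj
      have hz : f (single i p (1:F)) j' j' = 0 :=
        c1 f h2 hder i p j' j' hji.symm hj'i hjj'.symm
      simp [hpi, hjj', Ne.symm hjj', hz, Matrix.add_apply, Matrix.sub_apply] at hpq
      rw [hpq]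
    · simp [hpi, hpj, hjj', Ne.symm hjj', Matrix.add_apply, Matrix.sub_apply] at hpq
      rw [hpq]

theorem trz (hder : ∀ A B : Matrix (Fin n) (Fin n) F,
      f (A * B - B * A) = (f A * B - B * f A) + (A * f B - f B * A))
    (i j : Fin n) (hij : i ≠ j) :
    (f (single i j (1:F))).trace = 0 := by
  rw [keyP f hder i j i hij]
  rw [Matrix.trace_add, Matrix.trace_sub, Matrix.trace_sub,
    Matrix.trace_mul_comm (f (single i i 1)) (single i j 1),
    Matrix.trace_mul_comm (single i i (1:F)) (f (single i j 1))]
  ring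

theorem tr2 (h2 : (2:F) ≠ 0)
    (hder : ∀ A B : Matrix (Fin n) (Fin n) F,
      f (A * B - B * A) = (f A * B - B * f A) + (A * f B - f B * A))
    (i j : Fin n) (hij : i ≠ j) :
    f (single i j (1:F)) i i = - f (single i j (1:F)) j j := by
  have ht := trz f hder i j hij
  have hsum : ∀ p : Fin n, f (single i j (1:F)) p p =
      (if p = i then f (single i j (1:F)) i i else 0) +
      (if p = j then f (single i j (1:F)) j j else 0) := by
    intro p
    by_cases hpi : p = i
    · subst hpi; simp [hij]
    · by_cases hpj : p = j
      · subst hpj; simp [hpi]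
      · simp [hpi, hpj, c1 f h2 hder i j p p hij hpi hpj]
  rw [Matrix.trace] at ht
  simp only [Matrix.diag] at ht
  rw [Finset.sum_congr rfl (fun p _ => hsum p), Finset.sum_add_distrib,
    Finset.sum_ite_eq' Finset.univ i, Finset.sum_ite_eq' Finset.univ j] at ht
  simp at ht
  linear_combination ht

theorem ddiag (hder : ∀ A B : Matrix (Fin n) (Fin n) F,
      f (A * B - B * A) = (f A * B - B * f A) + (A * f B - f B * A))
    (i j : Fin n) (hij : i ≠ j) :
    f (single i i (1:F)) j j = f (single i i (1:F)) i i := by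
  have h := keyP f hder i j i hij
  have hpq := Matrix.ext_iff.mpr h i j
  simp [hij, Ne.symm hij, Matrix.add_apply, Matrix.sub_apply] at hpq
  linear_combination -hpq

theorem ceq (h2 : (2:F) ≠ 0)
    (hder : ∀ A B : Matrix (Fin n) (Fin n) F,
      f (A * B - B * A) = (f A * B - B * f A) + (A * f B - f B * A))
    (i j : Fin n) (hij : i ≠ j) :
    f (single i i (1:F)) i i = f (single j j (1:F)) j j := by
  have h := hder (single i j (1:F)) (single j i 1)
  rw [single_mul_single_same, single_mul_single_same, one_mul, map_sub] at h
  have ha := Matrix.ext_iff.mpr h i i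
  have hb := Matrix.ext_iff.mpr h j j
  have d1 := ddiag f hder j i hij.symm
  have d2 := ddiag f hder i j hij
  simp [hij, Ne.symm hij, Matrix.add_apply, Matrix.sub_apply] at ha hb
  exact half h2 (by linear_combination ha + hb + d1 - d2)

theorem skew (h2 : (2:F) ≠ 0)
    (hder : ∀ A B : Matrix (Fin n) (Fin n) F,
      f (A * B - B * A) = (f A * B - B * f A) + (A * f B - f B * A))
    (i j : Fin n) (hij : i ≠ j) :
    f (single i j (1:F)) i j = - f (single j i (1:F)) j i := by
  have h := hder (single i j (1:F)) (single j i 1)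
  rw [single_mul_single_same, single_mul_single_same, one_mul, map_sub] at h
  have ha := Matrix.ext_iff.mpr h i i
  have d1 := ddiag f hder j i hij.symm
  have hc := ceq f h2 hder i j hij
  simp [hij, Ne.symm hij, Matrix.add_apply, Matrix.sub_apply] at ha
  linear_combination -ha + hc - d1

theorem czero (hder : ∀ A B : Matrix (Fin n) (Fin n) F,
      f (A * B - B * A) = (f A * B - B * f A) + (A * f B - f B * A))
    (i p q : Fin n) (hpq0 : p ≠ q) (hpi : p ≠ i) (hqi : q ≠ i) :
    f (single i i (1:F)) p q = 0 := by
  have h := hder (single i i (1:F)) (single q q 1)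
  rw [single_mul_single_of_ne (1:F) i i q (Ne.symm hqi) 1,
    single_mul_single_of_ne (1:F) q q i hqi 1, sub_self, map_zero] at h
  have hpq := Matrix.ext_iff.mpr h.symm p q
  simpa [hpq0, hpi, hqi, Matrix.add_apply, Matrix.sub_apply] using hpq

theorem coldiag (hder : ∀ A B : Matrix (Fin n) (Fin n) F,
      f (A * B - B * A) = (f A * B - B * f A) + (A * f B - f B * A))
    (i p j : Fin n) (hpi : p ≠ i) (hji : j ≠ i) :
    f (single i i (1:F)) p i = f (single i j (1:F)) p j := by
  have h := keyP f hder i j i hji.symm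
  have hpq := Matrix.ext_iff.mpr h p j
  simp [hpi, hji, Matrix.add_apply, Matrix.sub_apply] at hpq
  rw [hpq]

theorem rowdiag (hder : ∀ A B : Matrix (Fin n) (Fin n) F,
      f (A * B - B * A) = (f A * B - B * f A) + (A * f B - f B * A))
    (i q : Fin n) (hqi : q ≠ i) :
    f (single i i (1:F)) i q = f (single q i (1:F)) q q := by
  have h := keyP f hder q i i hqi
  have hpq := Matrix.ext_iff.mpr h q q
  simp [hqi, Ne.symm hqi, Matrix.add_apply, Matrix.sub_apply] at hpq
  rw [hpq]

theorem rowoff (hder : ∀ A B : Matrix (Fin n) (Fin n) F,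
      f (A * B - B * A) = (f A * B - B * f A) + (A * f B - f B * A))
    (i j q : Fin n) (hij : i ≠ j) (hqj : q ≠ j) (hqi : q ≠ i) :
    f (single i j (1:F)) i q =
      f (single q j (1:F)) q q - f (single q j (1:F)) i i := by
  have h := keyP f hder i j q hij
  have hpq := Matrix.ext_iff.mpr h i q
  simp [hij, hqj, hqi, Ne.symm hqi, Matrix.add_apply, Matrix.sub_apply] at hpq
  linear_combination hpq

theorem diagsplit (hder : ∀ A B : Matrix (Fin n) (Fin n) F,
      f (A * B - B * A) = (f A * B - B * f A) + (A * f B - f B * A))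
    (i j z : Fin n) (hij : i ≠ j) (hiz : i ≠ z) (hjz : j ≠ z) :
    f (single i j (1:F)) i j =
      f (single i z (1:F)) i z + f (single z j (1:F)) z j := by
  have h := keyP f hder i j z hij
  have hpq := Matrix.ext_iff.mpr h i j
  simp [hij, hiz, hjz, Ne.symm hiz, Ne.symm hjz, Matrix.add_apply, Matrix.sub_apply] at hpq
  linear_combination hpq

theorem traceE (i j : Fin n) :
    (single i j (1:F)).trace = if i = j then 1 else 0 := by
  by_cases hij : i = j
  · subst hij
    rw [Matrix.trace_single_eq_same, if_pos rfl]
  · rw [Matrix.trace_single_eq_of_ne (h := hij), if_neg hij]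

end Stmt15Aux

open Stmt15Aux in
theorem stmt15 (F : Type*) [Field F] (hchar : ringChar F ≠ 2) (n : ℕ) (hn : 1 ≤ n)
    (f : Matrix (Fin n) (Fin n) F →ₗ[F] Matrix (Fin n) (Fin n) F)
    (hder : ∀ A B : Matrix (Fin n) (Fin n) F,
      f (A * B - B * A) = (f A * B - B * f A) + (A * f B - f B * A)) :
    ∃ (X : Matrix (Fin n) (Fin n) F) (c : F),
      ∀ A : Matrix (Fin n) (Fin n) F,
        f A = (X * A - A * X) + (c * A.trace) • (1 : Matrix (Fin n) (Fin n) F) := by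
  have h2 : (2:F) ≠ 0 := Ring.two_ne_zero hchar
  rcases Nat.lt_or_ge 1 n with hlt | hle
  · -- n ≥ 2
    set z0 : Fin n := ⟨0, by omega⟩ with hz0
    set z1 : Fin n := ⟨1, hlt⟩ with hz1
    have h01 : z0 ≠ z1 := by simp [hz0, hz1, Fin.ext_iff]
    set σ : Fin n → Fin n := fun i => if i = z0 then z1 else z0 with hσdef
    have hσ : ∀ i, σ i ≠ i := by
      intro i
      by_cases h : i = z0
      · rw [hσdef]; simp only [if_pos h]; rw [h]; exact Ne.symm h01
      · rw [hσdef]; simp only [if_neg h]; exact fun hc => h hc.symm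
    set X : Matrix (Fin n) (Fin n) F := Matrix.of (fun p i =>
      if p = i then (if i = z0 then 0 else f (single i z0 1) i z0)
      else f (single i (σ i) 1) p (σ i)) with hXdef
    set c : F := f (single z0 z0 (1:F)) z0 z0 with hcdef
    have hXoff : ∀ i j p : Fin n, j ≠ i → p ≠ i →
        f (single i j (1:F)) p j = X p i := by
      intro i j p hji hpi
      have hw := wd f h2 hder i j (σ i) p hji (hσ i) hpi
      rw [hXdef]
      simp only [Matrix.of_apply, if_neg hpi]
      exact hw
    have hXd : ∀ i : Fin n, i ≠ z0 → X i i = f (single i z0 (1:F)) i z0 := by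
      intro i hi
      rw [hXdef]
      simp only [Matrix.of_apply, if_true]
      rw [if_neg hi]
    have hX0 : X z0 z0 = 0 := by
      rw [hXdef]; simp
    have hcd : ∀ i p : Fin n, f (single i i (1:F)) p p = c := by
      intro i p
      have hii : f (single i i (1:F)) i i = c := by
        rcases eq_or_ne i z0 with rfl | h
        · rw [hcdef]
        · rw [hcdef]; exact ceq f h2 hder i z0 h
      rcases eq_or_ne p i with rfl | hpi
      · exact hii
      · rw [ddiag f hder i p (Ne.symm hpi)]; exact hii
    have hXij : ∀ i j : Fin n, i ≠ j →
        f (single i j (1:F)) i j = X i i - X j j := by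
      intro i j hij
      rcases eq_or_ne i z0 with rfl | hi0
      · have hs := skew f h2 hder z0 j hij
        rw [hs, hX0, hXd j (Ne.symm hij)]
        ring
      · rcases eq_or_ne j z0 with rfl | hj0
        · rw [hX0, hXd i hi0]; ring
        · have hd := diagsplit f hder i j z0 hij hi0 hj0
          have hs := skew f h2 hder z0 j (Ne.symm hj0)
          rw [hd, hs, hXd i hi0, hXd j hj0]
          ring
    have hbasis : ∀ i j : Fin n, f (single i j (1:F)) =
        (X * single i j 1 - single i j 1 * X) +
        (c * (single i j (1:F)).trace) • 1 := by
      intro i j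
      ext p q
      rw [traceE]
      have hXe : (X * single i j (1:F)) p q = if q = j then X p i else 0 := by
        by_cases h : q = j
        · subst h; rw [mul_single_apply_same, mul_one, if_pos rfl]
        · rw [mul_single_apply_of_ne _ _ _ _ _ h, if_neg h]
      have heX : (single i j (1:F) * X) p q = if p = i then X j q else 0 := by
        by_cases h : p = i
        · subst h; rw [single_mul_apply_same, one_mul, if_pos rfl]
        · rw [single_mul_apply_of_ne _ _ _ _ _ h, if_neg h]
      simp only [Matrix.add_apply, Matrix.sub_apply, Matrix.smul_apply, Matrix.one_apply,
        smul_eq_mul, hXe, heX]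
      rcases eq_or_ne i j with rfl | hij
      · rw [if_pos rfl]
        by_cases hpi : p = i
        · subst hpi
          by_cases hqp : q = p
          · subst hqp
            simp only [if_pos rfl, if_true]
            rw [hcd]
            ring
          · rw [if_neg hqp, if_pos rfl, if_neg (fun h => hqp h.symm)]
            have e1 := rowdiag f hder p q hqp
            have e2 := tr2 f h2 hder q p hqp
            have e3 := hXoff q p p (fun h => hqp h.symm) (fun h => hqp h.symm)
            linear_combination e1 + e2 - e3
        · by_cases hqi : q = i
          · subst hqi
            rw [if_pos rfl, if_neg hpi, if_neg hpi]
            have e1 := coldiag f hder q p (σ q) hpi (hσ q)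
            have e2 := hXoff q (σ q) p (hσ q) hpi
            linear_combination e1 + e2
          · rw [if_neg hqi, if_neg hpi]
            by_cases hpq0 : p = q
            · subst hpq0
              rw [if_pos rfl, hcd i p]
              ring
            · rw [if_neg hpq0, czero f hder i p q hpq0 hpi hqi]
              ring
      · rw [if_neg hij]
        by_cases hpi : p = i
        · subst hpi
          by_cases hqj : q = j
          · subst hqj
            rw [if_pos rfl, if_pos rfl]
            have e := hXij p q hij
            linear_combination e
          · rw [if_neg hqj, if_pos rfl]
            by_cases hqi : q = p
            · subst hqi
              have e1 := tr2 f h2 hder q j hij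
              have e2 := hXoff q j j (Ne.symm hij) (Ne.symm hij)
              linear_combination e1 - e2
            · have e1 := rowoff f hder p j q hij hqj hqi
              have e2 := c1 f h2 hder q j p p hqj (fun h => hqi h.symm) hij
              have e3 := tr2 f h2 hder q j hqj
              have e4 := hXoff q j j (Ne.symm hqj) (Ne.symm hqj)
              linear_combination e1 + e3 - e4 - e2
        · by_cases hqj : q = j
          · subst hqj
            rw [if_pos rfl, if_neg hpi]
            have e := hXoff i q p (Ne.symm hij) hpi
            linear_combination e
          · rw [if_neg hqj, if_neg hpi, c1 f h2 hder i j p q hij hpi hqj]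
            ring
    refine ⟨X, c, ?_⟩
    intro A
    let g : Matrix (Fin n) (Fin n) F →ₗ[F] Matrix (Fin n) (Fin n) F := {
      toFun := fun A => (X * A - A * X) + (c * A.trace) • 1
      map_add' := by
        intro A B
        simp only [Matrix.trace_add, mul_add, add_mul, add_smul]
        abel
      map_smul' := by
        intro a A
        show X * (a • A) - (a • A) * X + (c * (a • A).trace) • 1 =
          a • (X * A - A * X + (c * A.trace) • 1)
        rw [Matrix.trace_smul, smul_eq_mul, mul_smul_comm, smul_mul_assoc,
          mul_left_comm c a, ← smul_smul, ← smul_sub, ← smul_add]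
    }
    have hfg : f = g := by
      apply Module.Basis.ext (Matrix.stdBasis F (Fin n) (Fin n))
      rintro ⟨i, j⟩
      rw [Matrix.stdBasis_eq_single]
      show f _ = (X * single i j 1 - single i j 1 * X) +
        (c * (single i j (1:F)).trace) • 1
      exact hbasis i j
    rw [hfg]
    rfl
  · -- n = 1
    have hn1 : n = 1 := le_antisymm hle hn
    subst hn1
    refine ⟨0, f 1 0 0, ?_⟩
    intro A
    have hA : A = (A 0 0) • (1 : Matrix (Fin 1) (Fin 1) F) := by
      ext p q
      fin_cases p <;> fin_cases q <;> simp [Matrix.one_apply]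
    conv_lhs => rw [hA]
    rw [_root_.map_smul]
    ext p q
    fin_cases p <;> fin_cases q
    simp [Matrix.trace_fin_one, Matrix.one_apply]
    ring
end

section
/- Let F be a field of characteristic 3, n = 4, and let L ⊂ gl_4(F) be the Lie algebra spanned by E_{11} − E_{22}, E_{12}, E_{13}, E_{14}, E_{21}, E_{23}, E_{24} (traceless matrices supported in the first two rows, with the lower-left 2×2 block having only the (2,1) entry). Then the linear map f determined by f(E_{12}) = E_{24} and f(E) = 0 on the other six basis elements is a derivation of L, but there is no X ∈ gl_4(F) with f(E_{12}) = [X, E_{12}]. -/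
/-- Membership in the span of E₁₁−E₂₂, E₁₂, E₁₃, E₁₄, E₂₁, E₂₃, E₂₄ (1-based indices):
rows 3,4 are zero and the diagonal is traceless. -/
def inL4 {F : Type*} [Field F] (A : Matrix (Fin 4) (Fin 4) F) : Prop :=
  (∀ c : Fin 4, A 2 c = 0 ∧ A 3 c = 0) ∧ A 1 1 = -A 0 0

lemma decomp4 {F : Type*} [Field F] (A : Matrix (Fin 4) (Fin 4) F) (hA : inL4 A) :
    A = A 0 0 • (Matrix.single 0 0 1 - Matrix.single 1 1 1)
      + A 0 1 • Matrix.single 0 1 1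
      + A 0 2 • Matrix.single 0 2 1
      + A 0 3 • Matrix.single 0 3 1
      + A 1 0 • Matrix.single 1 0 1
      + A 1 2 • Matrix.single 1 2 1
      + A 1 3 • Matrix.single 1 3 1 := by
  obtain ⟨hrows, hdiag⟩ := hA
  ext i j
  fin_cases i <;> fin_cases j <;>
    simp_all [Matrix.single, Matrix.add_apply, Matrix.smul_apply, Matrix.sub_apply]

theorem stmt18 (F : Type*) [Field F] [CharP F 3]
    (f : Matrix (Fin 4) (Fin 4) F →ₗ[F] Matrix (Fin 4) (Fin 4) F)
    (h12 : f (Matrix.single 0 1 1) = Matrix.single 1 3 1)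
    (hH : f (Matrix.single 0 0 1 - Matrix.single 1 1 1) = 0)
    (h13 : f (Matrix.single 0 2 1) = 0)
    (h14 : f (Matrix.single 0 3 1) = 0)
    (h21 : f (Matrix.single 1 0 1) = 0)
    (h23 : f (Matrix.single 1 2 1) = 0)
    (h24 : f (Matrix.single 1 3 1) = 0) :
    (∀ A : Matrix (Fin 4) (Fin 4) F, inL4 A → inL4 (f A)) ∧
    (∀ A B : Matrix (Fin 4) (Fin 4) F, inL4 A → inL4 B →
      f (A * B - B * A) = (f A * B - B * f A) + (A * f B - f B * A)) ∧
    ¬ ∃ X : Matrix (Fin 4) (Fin 4) F,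
        f (Matrix.single 0 1 1) =
          X * Matrix.single 0 1 1 - Matrix.single 0 1 1 * X := by
  have key : ∀ A : Matrix (Fin 4) (Fin 4) F, inL4 A →
      f A = A 0 1 • Matrix.single 1 3 1 := by
    intro A hA
    conv_lhs => rw [decomp4 A hA]
    simp only [map_add, map_smul, h12, hH, h13, h14, h21, h23, h24, smul_zero,
      add_zero, zero_add]
  have h3 : (3 : F) = 0 := by exact_mod_cast (CharP.cast_eq_zero F 3)
  refine ⟨?_, ?_, ?_⟩
  · intro A hA
    rw [key A hA]
    refine ⟨fun c => ?_, ?_⟩ <;>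
      simp [Matrix.single, Matrix.smul_apply]
  · intro A B hA hB
    obtain ⟨hAr, hAd⟩ := hA
    obtain ⟨hBr, hBd⟩ := hB
    have hA2 : ∀ c, A 2 c = 0 := fun c => (hAr c).1
    have hA3 : ∀ c, A 3 c = 0 := fun c => (hAr c).2
    have hB2 : ∀ c, B 2 c = 0 := fun c => (hBr c).1
    have hB3 : ∀ c, B 3 c = 0 := fun c => (hBr c).2
    have hcomm : inL4 (A * B - B * A) := by
      constructor
      · intro c
        constructor <;>
          simp [Matrix.sub_apply, Matrix.mul_apply, Fin.sum_univ_four, hA2, hA3, hB2, hB3]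
      · simp [Matrix.sub_apply, Matrix.mul_apply, Fin.sum_univ_four, hA2, hA3, hB2, hB3,
          hAd, hBd]
        ring
    rw [key _ hcomm, key A ⟨hAr, hAd⟩, key B ⟨hBr, hBd⟩]
    ext i j
    fin_cases i <;> fin_cases j <;>
      · simp [Matrix.sub_apply, Matrix.add_apply, Matrix.smul_apply, Matrix.mul_apply,
          Fin.sum_univ_four, Matrix.single, hA2, hA3, hB2, hB3, hAd, hBd]
        try ring
        try linear_combination (A 0 0 * B 0 1 - A 0 1 * B 0 0) * h3
  · rintro ⟨X, hX⟩
    rw [h12] at hX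
    have := congrFun (congrFun hX 1) 3
    simp [Matrix.single, Matrix.sub_apply, Matrix.mul_apply, Fin.sum_univ_four] at this
end

section
/- Let F be a field with char(F) ≠ 2, let n ≥ 2 and let b ⊂ gl_n(F) be the Lie algebra of upper triangular n × n matrices. Then every derivation f of b has the form f(A) = [X, A] + μ(A)·I_n, where X ∈ b and μ : b → F is a linear functional vanishing on [b, b] (equivalently, μ(A) = ∑_{k=1}^n c_k a_{kk} for some constants c_k ∈ F with the restriction μ([b,b]) = 0). -/
open Matrix
namespace S19
variable {F : Type*} [Field F] {n : ℕ}

def E (F : Type*) [Field F] {n : ℕ} (i j : Fin n) : Matrix (Fin n) (Fin n) F :=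
  single i j 1

lemma E_apply (i j p q : Fin n) : E F i j p q = if i = p ∧ j = q then 1 else 0 := rfl

lemma mulE (A : Matrix (Fin n) (Fin n) F) (k l p q : Fin n) :
    (A * E F k l) p q = if l = q then A p k else 0 := by
  simp [E, Matrix.mul_apply, Matrix.single, ite_and]

lemma Emul (A : Matrix (Fin n) (Fin n) F) (k l p q : Fin n) :
    (E F k l * A) p q = if k = p then A l q else 0 := by
  simp [E, Matrix.mul_apply, Matrix.single, ite_and]

lemma EmulE (i j k l : Fin n) :
    E F i j * E F k l = if j = k then E F i l else 0 := by
  unfold E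
  split_ifs with h
  · subst h; rw [single_mul_single_same, one_mul]
  · exact single_mul_single_of_ne (h := h) ..

lemma utE (i j : Fin n) (h : (i:ℕ) ≤ (j:ℕ)) :
    ∀ p q : Fin n, (q:ℕ) < (p:ℕ) → E F i j p q = 0 := by
  intro p q hpq
  rw [E_apply, if_neg]
  rintro ⟨rfl, rfl⟩; omega

lemma E_smul (i j : Fin n) (a : F) : a • E F i j = single i j a := by
  rw [E, smul_single, smul_eq_mul, mul_one]

end S19

open S19

theorem stmt19 (F : Type*) [Field F] (hchar : ringChar F ≠ 2) (n : ℕ) (hn : 2 ≤ n)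
    (f : Matrix (Fin n) (Fin n) F →ₗ[F] Matrix (Fin n) (Fin n) F)
    (hmap : ∀ A : Matrix (Fin n) (Fin n) F,
      (∀ i j : Fin n, (j : ℕ) < (i : ℕ) → A i j = 0) →
      ∀ i j : Fin n, (j : ℕ) < (i : ℕ) → f A i j = 0)
    (hder : ∀ A B : Matrix (Fin n) (Fin n) F,
      (∀ i j : Fin n, (j : ℕ) < (i : ℕ) → A i j = 0) →
      (∀ i j : Fin n, (j : ℕ) < (i : ℕ) → B i j = 0) →
      f (A * B - B * A) = (f A * B - B * f A) + (A * f B - f B * A)) :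
    ∃ (X : Matrix (Fin n) (Fin n) F) (c : Fin n → F),
      (∀ i j : Fin n, (j : ℕ) < (i : ℕ) → X i j = 0) ∧
      ∀ A : Matrix (Fin n) (Fin n) F,
        (∀ i j : Fin n, (j : ℕ) < (i : ℕ) → A i j = 0) →
        f A = (X * A - A * X) + (∑ k, c k * A k k) • (1 : Matrix (Fin n) (Fin n) F) := by
  classical
  have rel0 : ∀ i j : Fin n, i ≠ j →
      (0 : Matrix (Fin n) (Fin n) F) =
        (f (E F i i) * E F j j - E F j j * f (E F i i))
        + (E F i i * f (E F j j) - f (E F j j) * E F i i) := by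
    intro i j hij
    have h := hder (E F i i) (E F j j) (utE i i le_rfl) (utE j j le_rfl)
    rw [EmulE, EmulE, if_neg hij, if_neg (Ne.symm hij), sub_zero, map_zero] at h
    exact h
  have hb : ∀ i p : Fin n, p ≠ i → f (E F p p) p i = - f (E F i i) p i := by
    intro i p hpi
    have h := congrFun (congrFun (rel0 i p (Ne.symm hpi)) p) i
    simp only [Matrix.zero_apply, Matrix.add_apply, Matrix.sub_apply, mulE, Emul,
      if_true, ite_true, hpi, Ne.symm hpi, ite_false, if_false] at h
    first | linear_combination h | linear_combination -h
  have hc : ∀ i q : Fin n, q ≠ i → f (E F q q) i q = - f (E F i i) i q := by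
    intro i q hqi
    have h := congrFun (congrFun (rel0 i q (Ne.symm hqi)) i) q
    simp only [Matrix.zero_apply, Matrix.add_apply, Matrix.sub_apply, mulE, Emul,
      if_true, ite_true, hqi, Ne.symm hqi, ite_false, if_false] at h
    first | linear_combination h | linear_combination -h
  have ha : ∀ i p q : Fin n, p ≠ i → q ≠ i → p ≠ q → f (E F i i) p q = 0 := by
    intro i p q hpi hqi hpq
    have h := congrFun (congrFun (rel0 i q (Ne.symm hqi)) p) q
    simp only [Matrix.zero_apply, Matrix.add_apply, Matrix.sub_apply, mulE, Emul,
      if_true, ite_true, hpq, Ne.symm hpq, Ne.symm hpi, Ne.symm hqi, ite_false, if_false] at h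
    first | linear_combination h | linear_combination -h
  have hd : ∀ i j k : Fin n, (j:ℕ) < (k:ℕ) → f (E F i i) j j = f (E F i i) k k := by
    intro i j k hjk
    have hjk' : j ≠ k := fun e => by rw [e] at hjk; omega
    have h := hder (E F i i) (E F j k) (utE i i le_rfl) (utE j k hjk.le)
    rw [EmulE, EmulE] at h
    rcases eq_or_ne i j with rfl | hij
    · rw [if_pos rfl, if_neg (Ne.symm hjk'), sub_zero] at h
      have h' := congrFun (congrFun h i) k
      simp only [Matrix.add_apply, Matrix.sub_apply, mulE, Emul,
        if_true, ite_true, hjk', ite_false, if_false] at h'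
      first | linear_combination h' | linear_combination -h'
    · rcases eq_or_ne i k with rfl | hik
      · rw [if_neg hij, if_pos rfl, zero_sub, map_neg] at h
        have h' := congrFun (congrFun h j) i
        simp only [Matrix.neg_apply, Matrix.add_apply, Matrix.sub_apply, mulE, Emul,
          if_true, ite_true, hij, ite_false, if_false] at h'
        first | linear_combination h' | linear_combination -h'
      · rw [if_neg hij, if_neg (Ne.symm hik), sub_zero, map_zero] at h
        have h' := congrFun (congrFun h.symm j) k
        simp only [Matrix.zero_apply, Matrix.add_apply, Matrix.sub_apply, mulE, Emul,
          if_true, ite_true, hij, hik, Ne.symm hik, ite_false, if_false] at h'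
        first | linear_combination h' | linear_combination -h'
  -- diagonal entries of f(E i i) are constant
  have hdiag : ∀ i k : Fin n, f (E F i i) k k = f (E F i i) i i := by
    intro i k
    rcases lt_trichotomy (k:ℕ) (i:ℕ) with h | h | h
    · exact hd i k i h
    · rw [Fin.ext h]
    · exact (hd i i k h).symm
  have hutf : ∀ i j : Fin n, (i:ℕ) ≤ (j:ℕ) → ∀ p q : Fin n, (q:ℕ) < (p:ℕ) → f (E F i j) p q = 0 :=
    fun i j h => hmap _ (utE i j h)
  have h2 : (2:F) ≠ 0 := Ring.two_ne_zero hchar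
  set X0 : Matrix (Fin n) (Fin n) F :=
    Matrix.of fun p q => (f (E F q q) p q - f (E F p p) p q) / 2 with hX0def
  have hX0app : ∀ p q : Fin n, X0 p q = (f (E F q q) p q - f (E F p p) p q) / 2 := fun p q => rfl
  have hX0diag : ∀ p : Fin n, X0 p p = 0 := by intro p; rw [hX0app]; simp
  have hX0ut : ∀ p q : Fin n, (q:ℕ) < (p:ℕ) → X0 p q = 0 := by
    intro p q h
    rw [hX0app, hutf q q le_rfl p q h, hutf p p le_rfl p q h]
    simp
  have hG1 : ∀ i : Fin n,
      f (E F i i) = X0 * E F i i - E F i i * X0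
        + f (E F i i) i i • (1 : Matrix (Fin n) (Fin n) F) := by
    intro i
    ext p q
    simp only [Matrix.add_apply, Matrix.sub_apply, mulE, Emul, Matrix.smul_apply,
      Matrix.one_apply, smul_eq_mul]
    by_cases hpq : p = q
    · subst hpq
      rw [if_pos rfl, mul_one, hdiag i p]
      rcases eq_or_ne i p with rfl | hip
      · simp
      · rw [if_neg hip, if_neg hip]; ring
    · rw [if_neg hpq, mul_zero, add_zero]
      rcases eq_or_ne i q with rfl | hiq
      · rw [if_pos rfl, if_neg (fun e => hpq e.symm), sub_zero, hX0app, hb i p hpq]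
        field_simp; ring
      · rcases eq_or_ne i p with rfl | hip
        · rw [if_neg hiq, if_pos rfl, hX0app, hc i q (Ne.symm hiq)]
          field_simp; ring
        · rw [if_neg hiq, if_neg hip, sub_zero]
          exact ha i p q (Ne.symm hip) (Ne.symm hiq) hpq
  have hG2 : ∀ i j : Fin n, (i:ℕ) < (j:ℕ) →
      f (E F i j) = X0 * E F i j - E F i j * X0 + f (E F i j) i j • E F i j := by
    intro i j hij
    have hijne : i ≠ j := fun e => by rw [e] at hij; omega
    have r2 := hder (E F i i) (E F i j) (utE i i le_rfl) (utE i j hij.le)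
    rw [EmulE, EmulE, if_pos rfl, if_neg (Ne.symm hijne), sub_zero] at r2
    have r3 := hder (E F j j) (E F i j) (utE j j le_rfl) (utE i j hij.le)
    rw [EmulE, EmulE, if_neg (Ne.symm hijne), if_pos rfl, zero_sub, map_neg] at r3
    ext p q
    have e2 := congrFun (congrFun r2 p) q
    have e3 := congrFun (congrFun r3 p) q
    simp only [Matrix.add_apply, Matrix.sub_apply, Matrix.neg_apply, mulE, Emul] at e2 e3
    simp only [Matrix.add_apply, Matrix.sub_apply, mulE, Emul, Matrix.smul_apply, E_apply,
      smul_eq_mul]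
    by_cases hp : i = p <;> by_cases hq : j = q
    · subst hp; subst hq
      simp [hX0diag]
    · subst hp
      simp only [hq, if_true, ite_true, ite_false, if_false, Ne.symm hijne, hijne,
        and_true, and_false] at e3 ⊢
      rw [hX0app, hc j q (Ne.symm hq)]
      first | linear_combination e3 | linear_combination -e3 |
        (field_simp; first | linear_combination e3 | linear_combination -e3 |
          linear_combination 2 * e3 | linear_combination (-2 : F) * e3)
    · subst hq
      simp only [hp, if_true, ite_true, ite_false, if_false, Ne.symm hijne, hijne,
        and_true, and_false] at e2 ⊢
      rw [hX0app, hb i p (Ne.symm hp)]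
      first | linear_combination e2 | linear_combination -e2 |
        (field_simp; first | linear_combination e2 | linear_combination -e2 |
          linear_combination 2 * e2 | linear_combination (-2 : F) * e2)
    · rcases eq_or_ne i q with rfl | hiq
      · simp only [hp, hq, if_true, ite_true, ite_false, if_false, and_false, false_and] at e2 ⊢
        have hz : (2:F) * f (E F i j) p i = 0 := by
          first | linear_combination e2 | linear_combination -e2
        have := (mul_eq_zero.mp hz).resolve_left h2
        simp [this]
      · simp only [hp, hq, hiq, if_true, ite_true, ite_false, if_false, and_false,
          false_and] at e2 ⊢
        first | linear_combination e2 | linear_combination -e2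
  have hadd : ∀ i j k : Fin n, (i:ℕ) < (j:ℕ) → (j:ℕ) < (k:ℕ) →
      f (E F i k) i k = f (E F i j) i j + f (E F j k) j k := by
    intro i j k hij hjk
    have hji : j ≠ i := fun e => by rw [e] at hij; omega
    have hki : k ≠ i := fun e => by rw [e] at hjk; omega
    have hjk' : j ≠ k := fun e => by rw [e] at hjk; omega
    have h := hder (E F i j) (E F j k) (utE i j hij.le) (utE j k hjk.le)
    rw [EmulE, EmulE, if_pos rfl, if_neg hki, sub_zero] at h
    have h' := congrFun (congrFun h i) k
    simp only [Matrix.add_apply, Matrix.sub_apply, mulE, Emul, if_true, ite_true,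
      hji, hjk', ite_false, if_false] at h'
    first | linear_combination h' | linear_combination -h'
  have hn0 : 0 < n := by omega
  set z : Fin n := ⟨0, hn0⟩ with hz
  set t : Fin n → F := fun k => if (0:ℕ) < (k:ℕ) then f (E F z k) z k else 0 with ht
  have hz0 : ((z:Fin n):ℕ) = 0 := rfl
  have hlam : ∀ i j : Fin n, (i:ℕ) < (j:ℕ) → f (E F i j) i j = t j - t i := by
    intro i j hij
    have hj : (0:ℕ) < (j:ℕ) := by omega
    have htj : t j = f (E F z j) z j := by simp only [ht]; rw [if_pos hj]
    by_cases hi : (0:ℕ) < (i:ℕ)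
    · have hti : t i = f (E F z i) z i := by simp only [ht]; rw [if_pos hi]
      have h := hadd z i j (by omega) hij
      rw [htj, hti, h]; ring
    · have hiz : i = z := Fin.ext (by omega)
      have hti : t i = 0 := by simp only [ht]; rw [if_neg (by omega)]
      rw [hti, sub_zero, htj, hiz]
  refine ⟨X0 + Matrix.diagonal (fun k => - t k), fun k => f (E F k k) k k, ?_, ?_⟩
  · intro i j hji
    have hij : i ≠ j := fun e => by rw [e] at hji; omega
    rw [Matrix.add_apply, hX0ut i j hji, Matrix.diagonal_apply_ne _ hij, add_zero]
  · intro A hA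
    set D : Matrix (Fin n) (Fin n) F := Matrix.diagonal (fun k => - t k) with hD
    have hDE : ∀ i j : Fin n, (i:ℕ) < (j:ℕ) →
        D * E F i j - E F i j * D = (t j - t i) • E F i j := by
      intro i j hij
      ext p q
      simp only [hD, Matrix.sub_apply, Matrix.diagonal_mul, Matrix.mul_diagonal,
        Matrix.smul_apply, E_apply, smul_eq_mul]
      split_ifs with h
      · obtain ⟨rfl, rfl⟩ := h; ring
      · ring
    have hDC : ∀ i : Fin n, D * E F i i - E F i i * D = 0 := by
      intro i
      ext p q
      simp only [hD, Matrix.sub_apply, Matrix.diagonal_mul, Matrix.mul_diagonal, E_apply,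
        Matrix.zero_apply]
      split_ifs with h
      · obtain ⟨rfl, rfl⟩ := h; ring
      · ring
    have key : ∀ i j : Fin n, (i:ℕ) ≤ (j:ℕ) →
        f (E F i j) = (X0 + D) * E F i j - E F i j * (X0 + D)
          + (if i = j then f (E F i i) i i else 0) • (1 : Matrix (Fin n) (Fin n) F) := by
      intro i j hij
      have expand : (X0 + D) * E F i j - E F i j * (X0 + D)
          = (X0 * E F i j - E F i j * X0) + (D * E F i j - E F i j * D) := by
        rw [add_mul, mul_add]; abel
      rcases lt_or_eq_of_le hij with hlt | heq
      · have hne : i ≠ j := fun e => by rw [e] at hlt; omega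
        rw [if_neg hne, zero_smul, add_zero, expand, hDE i j hlt, hG2 i j hlt,
          hlam i j hlt]
      · have hijeq : i = j := Fin.ext heq
        subst hijeq
        rw [if_pos rfl, expand, hDC i, add_zero]
        conv_lhs => rw [hG1 i]
    have hA2 : A = ∑ i : Fin n, ∑ j : Fin n, A i j • E F i j := by
      conv_lhs => rw [matrix_eq_sum_single A]
      exact Finset.sum_congr rfl fun i _ => Finset.sum_congr rfl fun j _ =>
        (E_smul i j (A i j)).symm
    have hsum : f A = ∑ i : Fin n, ∑ j : Fin n, A i j • f (E F i j) := by
      conv_lhs => rw [hA2]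
      rw [map_sum]
      exact Finset.sum_congr rfl fun i _ => by
        rw [map_sum]
        exact Finset.sum_congr rfl fun j _ => f.map_smul _ _
    have step : ∀ i j : Fin n,
        A i j • f (E F i j)
          = (X0 + D) * (A i j • E F i j) - (A i j • E F i j) * (X0 + D)
            + (if i = j then f (E F i i) i i * A i i else 0)
                • (1 : Matrix (Fin n) (Fin n) F) := by
      intro i j
      rcases le_or_gt (i:ℕ) (j:ℕ) with h | h
      · rw [key i j h, smul_add, smul_sub, mul_smul_comm, smul_mul_assoc, smul_smul]
        have hsc : A i j * (if i = j then f (E F i i) i i else 0)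
            = (if i = j then f (E F i i) i i * A i i else 0) := by
          rcases eq_or_ne i j with rfl | hne
          · rw [if_pos rfl, if_pos rfl, mul_comm]
          · rw [if_neg hne, if_neg hne, mul_zero]
        rw [hsc]
      · have hne : i ≠ j := fun e => by rw [e] at h; omega
        rw [hA i j h, if_neg hne]; simp
    have e1 : ∑ i : Fin n, ∑ j : Fin n, (X0 + D) * (A i j • E F i j) = (X0 + D) * A := by
      simp only [← Finset.mul_sum]; rw [← hA2]
    have e2 : ∑ i : Fin n, ∑ j : Fin n, (A i j • E F i j) * (X0 + D) = A * (X0 + D) := by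
      simp only [← Finset.sum_mul]; rw [← hA2]
    have e3 : ∑ i : Fin n, ∑ j : Fin n,
        (if i = j then f (E F i i) i i * A i i else 0) • (1 : Matrix (Fin n) (Fin n) F)
        = (∑ k, f (E F k k) k k * A k k) • (1 : Matrix (Fin n) (Fin n) F) := by
      have inner : ∀ i : Fin n,
          (∑ j : Fin n, (if i = j then f (E F i i) i i * A i i else 0)
            • (1 : Matrix (Fin n) (Fin n) F))
          = (f (E F i i) i i * A i i) • (1 : Matrix (Fin n) (Fin n) F) := by
        intro i
        simp only [ite_smul, zero_smul]
        simp
      simp only [inner]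
      rw [← Finset.sum_smul]
    calc f A = ∑ i : Fin n, ∑ j : Fin n, A i j • f (E F i j) := hsum
      _ = ∑ i : Fin n, ∑ j : Fin n,
            ((X0 + D) * (A i j • E F i j) - (A i j • E F i j) * (X0 + D)
              + (if i = j then f (E F i i) i i * A i i else 0)
                  • (1 : Matrix (Fin n) (Fin n) F)) :=
          Finset.sum_congr rfl fun i _ => Finset.sum_congr rfl fun j _ => step i j
      _ = (X0 + D) * A - A * (X0 + D) + (∑ k, f (E F k k) k k * A k k) • 1 := by
          simp only [Finset.sum_add_distrib, Finset.sum_sub_distrib]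
          rw [e1, e2, e3]
end
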